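/- arXiv:2309.00065 — 7 statements merged into one kernel-verified Lean document; each statement's English description precedes it below -/
import Mathlib

section
/- Let λ > 0, 0 < c̄ < c_B, and α ∈ (0,1). Then there exists a unique R₁ > 0 such that cosh(√λ(1−α)·R₁)/cosh(√λ · R₁) = c̄/c_B. -/
open Real Set

/-- The key monotonicity fact: `cosh (a R) / cosh (b R)` is strictly decreasing
on `[0, ∞)` when `0 < a < b`. -/
lemma cosh_ratio_strictAntiOn {a b : ℝ} (ha : 0 < a) (hab : a < b) :
    StrictAntiOn (fun R : ℝ => Real.cosh (a * R) / Real.cosh (b * R)) (Set.Ici 0) := by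
  have hb : 0 < b := ha.trans hab
  have hcont : ContinuousOn (fun R : ℝ => Real.cosh (a * R) / Real.cosh (b * R)) (Set.Ici 0) :=
    (Continuous.div (by continuity) (by continuity)
      (fun x => (Real.cosh_pos (x := b * x)).ne')).continuousOn
  apply strictAntiOn_of_deriv_neg (convex_Ici 0) hcont
  intro R hR
  rw [interior_Ici] at hR
  have hR0 : 0 < R := hR
  have h1 : HasDerivAt (fun R : ℝ => Real.cosh (a * R)) (Real.sinh (a * R) * a) R := by
    simpa [Function.comp_def] using (Real.hasDerivAt_cosh (a * R)).comp R ((hasDerivAt_id R).const_mul a)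
  have h2 : HasDerivAt (fun R : ℝ => Real.cosh (b * R)) (Real.sinh (b * R) * b) R := by
    simpa [Function.comp_def] using (Real.hasDerivAt_cosh (b * R)).comp R ((hasDerivAt_id R).const_mul b)
  have hd := (h1.div h2 (Real.cosh_pos (x := b * R)).ne')
  rw [show (fun R : ℝ => Real.cosh (a * R) / Real.cosh (b * R)) = ((fun R : ℝ => Real.cosh (a * R)) / fun R : ℝ => Real.cosh (b * R)) from rfl, hd.deriv]
  apply div_neg_of_neg_of_pos
  · -- numerator negative
    have hkey : Real.sinh (a * R) * Real.cosh (b * R) < Real.sinh (b * R) * Real.cosh (a * R) := by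
      have : 0 < Real.sinh (b * R - a * R) := by
        exact Real.sinh_pos_iff.mpr (by nlinarith)
      rw [Real.sinh_sub] at this
      linarith
    have hs : 0 < Real.sinh (b * R) * Real.cosh (a * R) := by
      have := Real.sinh_pos_iff.mpr (show (0:ℝ) < b*R by positivity)
      have := Real.cosh_pos (x := a * R)
      positivity
    have hsa : 0 ≤ Real.sinh (a * R) := Real.sinh_nonneg_iff.mpr (by positivity)
    nlinarith [Real.cosh_pos (x := b * R), Real.cosh_pos (x := a * R)]
  · positivity

/-- Existence and uniqueness of the second critical radius `R₁ > 0` with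
`cosh (√λ (1-α) R₁) / cosh (√λ R₁) = c̄ / c_B`, for `λ > 0`, `0 < c̄ < c_B`, `α ∈ (0,1)`. -/
theorem stmt_4 (lam cbar cB alpha : ℝ) (hlam : 0 < lam) (hcbar : 0 < cbar) (hc : cbar < cB)
    (halpha : alpha ∈ Set.Ioo (0 : ℝ) 1) :
    ∃! R₁ : ℝ, 0 < R₁ ∧
      Real.cosh (Real.sqrt lam * (1 - alpha) * R₁) / Real.cosh (Real.sqrt lam * R₁)
        = cbar / cB := by
  obtain ⟨ha0, ha1⟩ := halpha
  set b : ℝ := Real.sqrt lam with hbdef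
  have hbpos : 0 < b := Real.sqrt_pos.mpr hlam
  set a : ℝ := b * (1 - alpha) with hadef
  have hapos : 0 < a := by
    have : 0 < 1 - alpha := by linarith
    positivity
  have hab : a < b := by nlinarith
  have hcB : 0 < cB := hcbar.trans hc
  set t : ℝ := cbar / cB with htdef
  have ht0 : 0 < t := div_pos hcbar hcB
  have ht1 : t < 1 := (div_lt_one hcB).mpr hc
  set f : ℝ → ℝ := fun R => Real.cosh (a * R) / Real.cosh (b * R) with hfdef
  have hanti : StrictAntiOn f (Set.Ici 0) := cosh_ratio_strictAntiOn hapos hab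
  have hcont : ContinuousOn f (Set.Ici 0) :=
    (Continuous.div (by continuity) (by continuity)
      (fun x => (Real.cosh_pos (x := b * x)).ne')).continuousOn
  have hf0 : f 0 = 1 := by simp [hfdef]
  -- choose R₂ with f R₂ < t
  set R₂ : ℝ := (Real.log (2 / t) + 1) / (b - a) with hR₂def
  have hlogpos : 0 < Real.log (2 / t) := by
    apply Real.log_pos
    rw [lt_div_iff₀ ht0]
    linarith
  have hR₂pos : 0 < R₂ := by
    apply div_pos (by linarith) (by linarith)
  have hfR₂ : f R₂ < t := by
    have h1 : Real.cosh (a * R₂) ≤ Real.exp (a * R₂) := by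
      rw [Real.cosh_eq]
      have : Real.exp (-(a * R₂)) ≤ Real.exp (a * R₂) := by
        apply Real.exp_le_exp.mpr
        nlinarith
      linarith
    have h2 : Real.exp (b * R₂) / 2 ≤ Real.cosh (b * R₂) := by
      rw [Real.cosh_eq]
      have := (Real.exp_pos (-(b * R₂))).le
      linarith
    have h3 : f R₂ ≤ Real.exp (a * R₂) / (Real.exp (b * R₂) / 2) := by
      apply div_le_div₀ (Real.exp_pos _).le h1 (by positivity) h2
    have h4 : Real.exp (a * R₂) / (Real.exp (b * R₂) / 2) = 2 * Real.exp (a * R₂ - b * R₂) := by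
      rw [Real.exp_sub]
      field_simp
    have h5 : 2 * Real.exp (a * R₂ - b * R₂) < t := by
      have hlt : a * R₂ - b * R₂ < Real.log (t / 2) := by
        have : (b - a) * R₂ = Real.log (2 / t) + 1 := by
          rw [hR₂def, mul_div_cancel₀ _ (by linarith : b - a ≠ 0)]
        have hlog : Real.log (t / 2) = -Real.log (2 / t) := by
          rw [← Real.log_inv]
          congr 1
          field_simp
        nlinarith
      have := Real.exp_lt_exp.mpr hlt
      rw [Real.exp_log (by positivity)] at this
      linarith
    linarith [h3.trans_lt (h4 ▸ h5)]
  -- existence by IVT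
  have hsub : Set.Icc (f R₂) (f 0) ⊆ f '' Set.Icc 0 R₂ :=
    intermediate_value_Icc' hR₂pos.le (hcont.mono (Set.Icc_subset_Ici_self))
  have htmem : t ∈ Set.Icc (f R₂) (f 0) := ⟨hfR₂.le, by rw [hf0]; exact ht1.le⟩
  obtain ⟨R, hRmem, hfR⟩ := hsub htmem
  have hRpos : 0 < R := by
    rcases hRmem.1.lt_or_eq with h | h
    · exact h
    · exfalso; rw [← h, hf0] at hfR; linarith
  refine ⟨R, ⟨hRpos, ?_⟩, ?_⟩
  · simpa [hfdef, hadef, mul_comm, mul_assoc, mul_left_comm] using hfR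
  · rintro y ⟨hy, hfy⟩
    have hfy' : f y = t := by
      simpa [hfdef, hadef, mul_comm, mul_assoc, mul_left_comm] using hfy
    exact hanti.injOn (Set.mem_Ici.mpr hy.le) (Set.mem_Ici.mpr hRpos.le)
      (by rw [hfy', hfR])
end

section
/- For every β ≥ 0, the equation F(R̄, β) = 0 has a unique root R̄ in (0, +∞). -/
/-- The transcendental function `F(R̄, β)` from the necrotic-core system. -/
noncomputable def Fnec (lam cbar cB alpha Rbar beta : ℝ) : ℝ :=
  cbar / cB * (Real.cosh (Real.sqrt lam * Rbar) + beta * Real.sinh (Real.sqrt lam * Rbar)) -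
    (Real.cosh (Real.sqrt lam * (1 - alpha) * Rbar) +
      beta * Real.sinh (Real.sqrt lam * (1 - alpha) * Rbar))

open Real Set

set_option maxHeartbeats 1000000 in
/-- For every fixed `β ≥ 0`, the equation `F(R̄, β) = 0` has a unique root `R̄ ∈ (0, ∞)`. -/
theorem stmt_6 (lam cbar cB alpha : ℝ) (hlam : 0 < lam) (hcbar : 0 < cbar) (hc : cbar < cB)
    (halpha : alpha ∈ Set.Ioo (0 : ℝ) 1) (beta : ℝ) (hbeta : 0 ≤ beta) :
    ∃! Rbar : ℝ, 0 < Rbar ∧ Fnec lam cbar cB alpha Rbar beta = 0 := by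
  obtain ⟨ha0, ha1⟩ := halpha
  set k := Real.sqrt lam with hk
  have hkpos : 0 < k := Real.sqrt_pos.mpr hlam
  have hcB : 0 < cB := hcbar.trans hc
  set r := cbar / cB with hr
  have hr0 : 0 < r := div_pos hcbar hcB
  have hr1 : r < 1 := (div_lt_one hcB).mpr hc
  clear_value k r
  set h : ℝ → ℝ := fun x => Real.cosh x + beta * Real.sinh x with hh
  set h' : ℝ → ℝ := fun x => Real.sinh x + beta * Real.cosh x with hh'
  clear_value h h'
  have hcont : Continuous h := by
    rw [hh]; exact Real.continuous_cosh.add (continuous_const.mul Real.continuous_sinh)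
  have hcont' : Continuous h' := by
    rw [hh']; exact Real.continuous_sinh.add (continuous_const.mul Real.continuous_cosh)
  have hpos : ∀ x : ℝ, 0 ≤ x → 0 < h x := by
    intro x hx
    have h1 : 1 ≤ Real.cosh x := Real.one_le_cosh x
    have h2 : 0 ≤ Real.sinh x := Real.sinh_nonneg_iff.mpr hx
    have h3 := mul_nonneg hbeta h2
    rw [hh]; dsimp only; linarith
  have hder : ∀ x : ℝ, HasDerivAt h (h' x) x := by
    intro x
    rw [hh, hh']
    simpa using
      (Real.hasDerivAt_cosh x).fun_add ((Real.hasDerivAt_sinh x).const_mul beta)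
  have h'der : ∀ x : ℝ, HasDerivAt h' (h x) x := by
    intro x
    rw [hh, hh']
    simpa using
      (Real.hasDerivAt_sinh x).fun_add ((Real.hasDerivAt_cosh x).const_mul beta)
  -- N x = x * h' x / h x is strictly monotone on [0, ∞)
  set N : ℝ → ℝ := fun x => x * h' x / h x with hN
  clear_value N
  have hNder : ∀ x : ℝ, 0 < x → HasDerivAt N
      (((1 * h' x + x * h x) * h x - x * h' x * h' x) / (h x) ^ 2) x := by
    intro x hx
    have hd : HasDerivAt (fun y => y * h' y) (1 * h' x + x * h x) x :=
      (hasDerivAt_id x).mul (h'der x)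
    rw [hN]
    exact hd.div (hder x) (ne_of_gt (hpos x hx.le))
  have hNmono : StrictMonoOn N (Ici (0:ℝ)) := by
    apply strictMonoOn_of_deriv_pos (convex_Ici 0)
    · rw [hN]
      apply ContinuousOn.div
      · exact (continuous_id.mul hcont').continuousOn
      · exact hcont.continuousOn
      · intro x hx; exact ne_of_gt (hpos x hx)
    · intro x hx
      rw [interior_Ici] at hx
      have hx0 : (0:ℝ) < x := hx
      rw [(hNder x hx0).deriv]
      apply div_pos _ (pow_pos (hpos x hx0.le) 2)
      have key : Real.cosh x ^ 2 - Real.sinh x ^ 2 = 1 := Real.cosh_sq_sub_sinh_sq x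
      have hs : x ≤ Real.sinh x := Real.self_le_sinh_iff.mpr hx0.le
      have hc1 : 1 ≤ Real.cosh x := Real.one_le_cosh x
      have hs0 : 0 ≤ Real.sinh x := le_trans hx0.le hs
      have hsc : x ≤ Real.sinh x * Real.cosh x := by nlinarith
      rw [hh, hh']
      dsimp only
      have e : (1 * (Real.sinh x + beta * Real.cosh x) + x * (Real.cosh x + beta * Real.sinh x)) *
            (Real.cosh x + beta * Real.sinh x) -
            x * (Real.sinh x + beta * Real.cosh x) * (Real.sinh x + beta * Real.cosh x) =
          (Real.sinh x + beta * Real.cosh x) * (Real.cosh x + beta * Real.sinh x) +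
            x * (1 - beta ^ 2) := by
        linear_combination x * (1 - beta ^ 2) * key
      rw [e]
      nlinarith [mul_nonneg (sq_nonneg beta) (sub_nonneg.mpr hsc),
        mul_nonneg hbeta (add_nonneg (sq_nonneg (Real.cosh x)) (sq_nonneg (Real.sinh x)))]
  -- L R = log (h (k R)) - log (h (k (1-α) R)) is strictly monotone on [0, ∞)
  set L : ℝ → ℝ := fun R => Real.log (h (k * R)) - Real.log (h (k * (1 - alpha) * R))
    with hL
  clear_value L
  have hLmono : StrictMonoOn L (Ici (0:ℝ)) := by
    apply strictMonoOn_of_deriv_pos (convex_Ici 0)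
    · rw [hL]
      apply ContinuousOn.sub
      · apply ContinuousOn.log
        · exact (hcont.comp (continuous_const.mul continuous_id)).continuousOn
        · intro x hx
          exact ne_of_gt (hpos _ (mul_nonneg hkpos.le hx))
      · apply ContinuousOn.log
        · exact (hcont.comp (continuous_const.mul continuous_id)).continuousOn
        · intro x hx
          exact ne_of_gt (hpos _ (mul_nonneg (mul_nonneg hkpos.le (by linarith)) hx))
    · intro R hR
      rw [interior_Ici] at hR
      have hR0 : (0:ℝ) < R := hR
      have hx1 : 0 < k * R := mul_pos hkpos hR0
      have hx2 : 0 < k * (1 - alpha) * R := mul_pos (mul_pos hkpos (by linarith)) hR0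
      have hlt : k * (1 - alpha) * R < k * R := by nlinarith
      have hd1 : HasDerivAt (fun R => Real.log (h (k * R))) (h' (k * R) * k / h (k * R)) R := by
        have hin : HasDerivAt (fun R : ℝ => k * R) k R := by
          simpa using (hasDerivAt_id R).const_mul k
        have hcomp : HasDerivAt (fun R => h (k * R)) (h' (k * R) * k) R :=
          (hder (k * R)).comp R hin
        simpa [div_eq_mul_inv, mul_comm] using hcomp.log (ne_of_gt (hpos _ hx1.le))
      have hd2 : HasDerivAt (fun R => Real.log (h (k * (1 - alpha) * R)))
          (h' (k * (1 - alpha) * R) * (k * (1 - alpha)) / h (k * (1 - alpha) * R)) R := by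
        have hin : HasDerivAt (fun R : ℝ => k * (1 - alpha) * R) (k * (1 - alpha)) R := by
          simpa using (hasDerivAt_id R).const_mul (k * (1 - alpha))
        have hcomp : HasDerivAt (fun R => h (k * (1 - alpha) * R))
            (h' (k * (1 - alpha) * R) * (k * (1 - alpha))) R :=
          (hder (k * (1 - alpha) * R)).comp R hin
        simpa [div_eq_mul_inv, mul_comm] using hcomp.log (ne_of_gt (hpos _ hx2.le))
      rw [hL, (hd1.fun_sub hd2).deriv]
      have hNlt : N (k * (1 - alpha) * R) < N (k * R) :=
        hNmono (le_of_lt hx2) (le_of_lt hx1) hlt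
      have e1 : h' (k * R) * k / h (k * R) = N (k * R) / R := by
        rw [hN]
        dsimp only
        rw [div_div, div_eq_div_iff (ne_of_gt (hpos _ hx1.le))
          (mul_ne_zero (ne_of_gt (hpos _ hx1.le)) (ne_of_gt hR0))]
        ring
      have e2 : h' (k * (1 - alpha) * R) * (k * (1 - alpha)) / h (k * (1 - alpha) * R)
          = N (k * (1 - alpha) * R) / R := by
        rw [hN]
        dsimp only
        rw [div_div, div_eq_div_iff (ne_of_gt (hpos _ hx2.le))
          (mul_ne_zero (ne_of_gt (hpos _ hx2.le)) (ne_of_gt hR0))]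
        ring
      rw [e1, e2, sub_pos]
      exact div_lt_div_of_pos_right hNlt hR0
  -- rewriting Fnec
  have Frewrite : ∀ R : ℝ,
      Fnec lam cbar cB alpha R beta = r * h (k * R) - h (k * (1 - alpha) * R) := by
    intro R; rw [Fnec, hh, hr, hk]
  -- any positive root has the same L-value
  have hroot_L : ∀ R : ℝ, 0 < R → Fnec lam cbar cB alpha R beta = 0 →
      L R = - Real.log r := by
    intro R hR hF
    rw [Frewrite] at hF
    have he : h (k * (1 - alpha) * R) = r * h (k * R) := by linarith
    have hne : h (k * R) ≠ 0 := ne_of_gt (hpos _ (mul_nonneg hkpos.le hR.le))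
    rw [hL]
    dsimp only
    rw [he, Real.log_mul (ne_of_gt hr0) hne]
    ring
  -- existence via IVT
  set c := 2 * (1 + beta) / r with hcdef
  have hc2 : 2 ≤ c := by
    rw [hcdef, le_div_iff₀ hr0]; nlinarith
  have hc0 : 0 < c := lt_of_lt_of_le two_pos hc2
  have hrc : r * c = 2 * (1 + beta) := by
    rw [hcdef]; field_simp
  clear_value c
  have hka : 0 < k * alpha := mul_pos hkpos ha0
  set R0 := (Real.log c + 1) / (k * alpha) with hR0def
  have hlogc : 0 < Real.log c := Real.log_pos (by linarith)
  have hR0pos : 0 < R0 := div_pos (by linarith) hka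
  have hexpe : k * alpha * R0 = Real.log c + 1 := by
    rw [hR0def]; field_simp
  clear_value R0
  have hexpα : Real.exp (k * alpha * R0) = c * Real.exp 1 := by
    rw [hexpe, Real.exp_add, Real.exp_log hc0]
  have hF0 : Fnec lam cbar cB alpha 0 beta < 0 := by
    rw [Frewrite, hh]
    simp only [mul_zero, Real.cosh_zero, Real.sinh_zero]
    nlinarith
  have hFR0 : 0 < Fnec lam cbar cB alpha R0 beta := by
    rw [Frewrite]
    have hkR0 : 0 ≤ k * R0 := (mul_pos hkpos hR0pos).le
    have h1 : Real.exp (k * R0) / 2 ≤ Real.cosh (k * R0) := by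
      rw [Real.cosh_eq]; have := (Real.exp_pos (-(k * R0))).le; linarith
    have h2 : 0 ≤ Real.sinh (k * R0) := Real.sinh_nonneg_iff.mpr hkR0
    set y := k * (1 - alpha) * R0 with hy
    have hy0 : 0 ≤ y := by
      rw [hy]
      exact mul_nonneg (mul_nonneg hkpos.le (by linarith)) hR0pos.le
    have hy5 : k * R0 = y + k * alpha * R0 := by rw [hy]; ring
    clear_value y
    have h3 : Real.cosh y ≤ Real.exp y := by
      rw [Real.cosh_eq]
      have e1 : Real.exp (-y) ≤ Real.exp y := Real.exp_le_exp.mpr (by linarith)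
      linarith
    have h4 : Real.sinh y ≤ Real.exp y := by
      rw [Real.sinh_eq]
      have := (Real.exp_pos (-y)).le
      have := (Real.exp_pos y).le
      linarith
    have h5 : Real.exp (k * R0) = Real.exp y * (c * Real.exp 1) := by
      rw [← hexpα, ← Real.exp_add, hy5]
    have hexp1 : 1 < Real.exp 1 := by
      have := Real.add_one_lt_exp (x := 1) one_ne_zero; linarith
    have hhy : h y ≤ (1 + beta) * Real.exp y := by
      rw [hh]; dsimp only
      have h6 := mul_le_mul_of_nonneg_left h4 hbeta
      nlinarith
    have hstep : (1 + beta) * Real.exp y < r * (Real.exp (k * R0) / 2) := by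
      rw [h5]
      have hey := Real.exp_pos y
      have e6 : r * (Real.exp y * (c * Real.exp 1) / 2)
          = (1 + beta) * Real.exp y * Real.exp 1 := by
        linear_combination (Real.exp y * Real.exp 1 / 2) * hrc
      rw [e6]
      have h7 := mul_lt_mul_of_pos_left hexp1
        (show 0 < (1 + beta) * Real.exp y by positivity)
      linarith
    have hhk : r * (Real.exp (k * R0) / 2) ≤ r * h (k * R0) := by
      apply mul_le_mul_of_nonneg_left _ hr0.le
      rw [hh]; dsimp only
      nlinarith
    linarith
  have hcontF : ContinuousOn (fun R => Fnec lam cbar cB alpha R beta) (Icc 0 R0) := by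
    have hcF : Continuous (fun R => Fnec lam cbar cB alpha R beta) := by
      simp only [Frewrite]
      exact (continuous_const.mul (hcont.comp (continuous_const.mul continuous_id))).sub
        (hcont.comp (continuous_const.mul continuous_id))
    exact hcF.continuousOn
  obtain ⟨R, hRmem, hRF⟩ :=
    intermediate_value_Ioo hR0pos.le hcontF (Set.mem_Ioo.mpr ⟨hF0, hFR0⟩)
  refine ⟨R, ⟨hRmem.1, hRF⟩, ?_⟩
  rintro R' ⟨hR', hF'⟩
  have e1 := hroot_L R' hR' hF'
  have e2 := hroot_L R hRmem.1 hRF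
  exact hLmono.injOn (Set.mem_Ici.mpr hR'.le) (Set.mem_Ici.mpr hRmem.1.le) (e1.trans e2.symm)
end

section
/- For β ≥ 0 let f(β) denote the unique root R̄ > 0 of F(R̄, β) = 0. Then f(0) = R₁, where R₁ > 0 is the unique positive solution of cosh(√λ(1−α)·R₁)/cosh(√λ·R₁) = c̄/c_B, and f is strictly decreasing: if 0 ≤ β₁ < β₂ then f(β₁) > f(β₂). -/
open Real

/-- For `0 < b < a` and `R > 0`, `b cosh(bR) sinh(aR) < a sinh(bR) cosh(aR)`. -/
lemma aux_h (a b : ℝ) (hb : 0 < b) (hba : b < a) {R : ℝ} (hR : 0 < R) :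
    b * Real.cosh (b * R) * Real.sinh (a * R) < a * Real.sinh (b * R) * Real.cosh (a * R) := by
  have ha : 0 < a := hb.trans hba
  set h : ℝ → ℝ := fun x => a * Real.sinh (b * x) * Real.cosh (a * x)
    - b * Real.cosh (b * x) * Real.sinh (a * x) with hdef
  have hd : ∀ x : ℝ, HasDerivAt h ((a ^ 2 - b ^ 2) * (Real.sinh (b * x) * Real.sinh (a * x))) x := by
    intro x
    have hbx : HasDerivAt (fun y : ℝ => b * y) b x := by
      simpa using (hasDerivAt_id x).const_mul b
    have hax : HasDerivAt (fun y : ℝ => a * y) a x := by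
      simpa using (hasDerivAt_id x).const_mul a
    have h1 := ((hbx.sinh.const_mul a).mul hax.cosh).sub ((hbx.cosh.const_mul b).mul hax.sinh)
    exact h1.congr_deriv (by ring)
  have hmono : StrictMonoOn h (Set.Ici (0 : ℝ)) := by
    apply strictMonoOn_of_deriv_pos (convex_Ici 0)
    · exact fun x _ => ((hd x).differentiableAt.continuousAt.continuousWithinAt)
    · intro x hx
      rw [interior_Ici, Set.mem_Ioi] at hx
      rw [(hd x).deriv]
      have hs1 : 0 < Real.sinh (b * x) := Real.sinh_pos_iff.mpr (mul_pos hb hx)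
      have hs2 : 0 < Real.sinh (a * x) := Real.sinh_pos_iff.mpr (mul_pos ha hx)
      have : 0 < a ^ 2 - b ^ 2 := by nlinarith
      positivity
  have h0 : h 0 = 0 := by simp [hdef]
  have := hmono (Set.self_mem_Ici) (Set.mem_Ici.mpr hR.le) hR
  rw [h0] at this
  simp only [hdef] at this
  linarith

/-- The ratio `(cosh(bR)+β sinh(bR))/(cosh(aR)+β sinh(aR))` is strictly decreasing. -/
lemma root_key (a b beta : ℝ) (hb : 0 < b) (hba : b < a) (hbeta : 0 ≤ beta) {R R' : ℝ}
    (hR : 0 < R) (hRR' : R < R') :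
    (Real.cosh (b * R') + beta * Real.sinh (b * R')) * (Real.cosh (a * R) + beta * Real.sinh (a * R)) <
      (Real.cosh (b * R) + beta * Real.sinh (b * R)) * (Real.cosh (a * R') + beta * Real.sinh (a * R')) := by
  have ha : 0 < a := hb.trans hba
  have Dpos : ∀ x : ℝ, 0 ≤ x → 0 < Real.cosh (a * x) + beta * Real.sinh (a * x) := by
    intro x hx
    have h1 : 0 ≤ Real.sinh (a * x) := Real.sinh_nonneg_iff.mpr (by positivity)
    nlinarith [Real.cosh_pos (a * x), mul_nonneg hbeta h1]
  set q : ℝ → ℝ := fun x =>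
    (Real.cosh (b * x) + beta * Real.sinh (b * x)) / (Real.cosh (a * x) + beta * Real.sinh (a * x))
    with hq
  have hanti : StrictAntiOn q (Set.Ici (0 : ℝ)) := by
    apply strictAntiOn_of_deriv_neg (convex_Ici 0)
    · apply ContinuousOn.div
      · fun_prop
      · fun_prop
      · exact fun x hx => (Dpos x hx).ne'
    · intro x hx
      rw [interior_Ici, Set.mem_Ioi] at hx
      have hbx : HasDerivAt (fun y : ℝ => b * y) b x := by
        simpa using (hasDerivAt_id x).const_mul b
      have hax : HasDerivAt (fun y : ℝ => a * y) a x := by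
        simpa using (hasDerivAt_id x).const_mul a
      have hN : HasDerivAt (fun y : ℝ => Real.cosh (b * y) + beta * Real.sinh (b * y))
          (Real.sinh (b * x) * b + beta * (Real.cosh (b * x) * b)) x :=
        hbx.cosh.add (hbx.sinh.const_mul beta)
      have hD : HasDerivAt (fun y : ℝ => Real.cosh (a * y) + beta * Real.sinh (a * y))
          (Real.sinh (a * x) * a + beta * (Real.cosh (a * x) * a)) x :=
        hax.cosh.add (hax.sinh.const_mul beta)
      have hQ := hN.div hD (Dpos x hx.le).ne'
      rw [show deriv q x = _ from hQ.deriv]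
      apply div_neg_of_neg_of_pos
      · -- numerator is negative
        have hs1 : 0 < Real.sinh (b * x) := Real.sinh_pos_iff.mpr (mul_pos hb hx)
        have hs2 : 0 < Real.sinh (a * x) := Real.sinh_pos_iff.mpr (mul_pos ha hx)
        have hc1 := Real.cosh_pos (b * x)
        have hc2 := Real.cosh_pos (a * x)
        have s1 : Real.sinh (b * x) * Real.cosh (a * x) < Real.cosh (b * x) * Real.sinh (a * x) := by
          have hsab : 0 < Real.sinh ((a - b) * x) :=
            Real.sinh_pos_iff.mpr (mul_pos (sub_pos.mpr hba) hx)
          have e := Real.sinh_sub (a * x) (b * x)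
          rw [show a * x - b * x = (a - b) * x by ring] at e
          linarith
        have e1 : 0 < a * (Real.cosh (b * x) * Real.sinh (a * x))
            - b * (Real.sinh (b * x) * Real.cosh (a * x)) := by
          nlinarith [mul_pos (sub_pos.mpr hba) (mul_pos hc1 hs2),
            mul_nonneg hb.le (sub_nonneg.mpr s1.le)]
        have e2 : 0 ≤ beta * ((a - b) * (Real.sinh (b * x) * Real.sinh (a * x)
            + Real.cosh (b * x) * Real.cosh (a * x))) :=
          mul_nonneg hbeta (mul_nonneg (sub_pos.mpr hba).le
            (by nlinarith [mul_pos hs1 hs2, mul_pos hc1 hc2]))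
        have e3 : 0 ≤ beta ^ 2 * (a * Real.sinh (b * x) * Real.cosh (a * x)
            - b * Real.cosh (b * x) * Real.sinh (a * x)) :=
          mul_nonneg (sq_nonneg beta) (by linarith [aux_h a b hb hba hx])
        nlinarith [e1, e2, e3]
      · positivity
  have hq' := hanti (Set.mem_Ici.mpr hR.le) (Set.mem_Ici.mpr (hR.trans hRR').le) hRR'
  simp only [hq] at hq'
  exact (div_lt_div_iff₀ (Dpos R' (hR.trans hRR').le) (Dpos R hR.le)).mp hq'

lemma main_aux (a b k : ℝ) (hb : 0 < b) (hba : b < a) (hk : 0 < k) (f : ℝ → ℝ)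
    (hf : ∀ beta, 0 ≤ beta → 0 < f beta ∧
      k * (Real.cosh (a * f beta) + beta * Real.sinh (a * f beta))
        = Real.cosh (b * f beta) + beta * Real.sinh (b * f beta))
    (R₁ : ℝ) (hR₁pos : 0 < R₁) (hR₁ : Real.cosh (b * R₁) = k * Real.cosh (a * R₁)) :
    f 0 = R₁ ∧ ∀ b₁ b₂, 0 ≤ b₁ → b₁ < b₂ → f b₂ < f b₁ := by
  have ha : 0 < a := hb.trans hba
  have uniq : ∀ beta, 0 ≤ beta → ∀ R R', 0 < R → 0 < R' →
      k * (Real.cosh (a * R) + beta * Real.sinh (a * R))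
        = Real.cosh (b * R) + beta * Real.sinh (b * R) →
      k * (Real.cosh (a * R') + beta * Real.sinh (a * R'))
        = Real.cosh (b * R') + beta * Real.sinh (b * R') → R = R' := by
    intro beta hbeta R R' hRp hRp' h1 h2
    by_contra hne
    rcases lt_or_gt_of_ne hne with h | h
    · have hkey := root_key a b beta hb hba hbeta hRp h
      rw [← h1, ← h2] at hkey
      nlinarith [hkey]
    · have hkey := root_key a b beta hb hba hbeta hRp' h
      rw [← h1, ← h2] at hkey
      nlinarith [hkey]
  constructor
  · obtain ⟨hp0, he0⟩ := hf 0 le_rfl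
    apply uniq 0 le_rfl (f 0) R₁ hp0 hR₁pos he0
    simp [hR₁]
  · intro b₁ b₂ hb₁ hb₁₂
    have hb₂ : 0 ≤ b₂ := hb₁.trans hb₁₂.le
    obtain ⟨hp1, he1⟩ := hf b₁ hb₁
    obtain ⟨hp2, he2⟩ := hf b₂ hb₂
    set R := f b₁
    set R' := f b₂
    have Dpos : ∀ (beta x : ℝ), 0 ≤ beta → 0 < x →
        0 < Real.cosh (a * x) + beta * Real.sinh (a * x) := by
      intro beta x hbe hx
      have h1 : 0 ≤ Real.sinh (a * x) := Real.sinh_nonneg_iff.mpr (by positivity)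
      nlinarith [Real.cosh_pos (a * x), mul_nonneg hbe h1]
    -- pointwise in beta: N_{b₂}(R) < k * D_{b₂}(R)
    have hsab : 0 < Real.sinh ((a - b) * R) :=
      Real.sinh_pos_iff.mpr (mul_pos (sub_pos.mpr hba) hp1)
    have esub := Real.sinh_sub (a * R) (b * R)
    rw [show a * R - b * R = (a - b) * R by ring] at esub
    have hK2 : (Real.cosh (b * R) + b₂ * Real.sinh (b * R))
        * (Real.cosh (a * R) + b₁ * Real.sinh (a * R)) <
        (Real.cosh (b * R) + b₁ * Real.sinh (b * R))
        * (Real.cosh (a * R) + b₂ * Real.sinh (a * R)) := by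
      nlinarith [mul_pos (sub_pos.mpr hb₁₂) hsab]
    rw [← he1] at hK2
    have hD1 : 0 < Real.cosh (a * R) + b₁ * Real.sinh (a * R) := Dpos b₁ R hb₁ hp1
    have hD2 : 0 < Real.cosh (a * R) + b₂ * Real.sinh (a * R) := Dpos b₂ R hb₂ hp1
    have h5 : Real.cosh (b * R) + b₂ * Real.sinh (b * R)
        < k * (Real.cosh (a * R) + b₂ * Real.sinh (a * R)) := by
      have := (mul_lt_mul_iff_left₀ hD1).mp (by nlinarith [hK2] :
        (Real.cosh (b * R) + b₂ * Real.sinh (b * R))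
          * (Real.cosh (a * R) + b₁ * Real.sinh (a * R))
        < (k * (Real.cosh (a * R) + b₂ * Real.sinh (a * R)))
          * (Real.cosh (a * R) + b₁ * Real.sinh (a * R)))
      exact this
    by_contra hnot
    push_neg at hnot
    rcases eq_or_lt_of_le hnot with heq | hlt
    · rw [← heq] at he2
      linarith [he2, h5]
    · have hkey := root_key a b b₂ hb hba hb₂ hp1 hlt
      rw [← he2] at hkey
      have hD2' : 0 < Real.cosh (a * R') + b₂ * Real.sinh (a * R') := Dpos b₂ R' hb₂ hp2
      nlinarith [hkey, mul_lt_mul_of_pos_right h5 hD2']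

/-- If `f β` denotes the unique positive root `R̄` of `F(R̄, β) = 0`, then `f 0 = R₁`
(the unique positive solution of `cosh (√λ (1-α) R₁) / cosh (√λ R₁) = c̄ / c_B`)
and `f` is strictly decreasing on `[0, ∞)`. -/
theorem stmt_7 (lam cbar cB alpha : ℝ) (hlam : 0 < lam) (hcbar : 0 < cbar) (hc : cbar < cB)
    (halpha : alpha ∈ Set.Ioo (0 : ℝ) 1) (f : ℝ → ℝ)
    (hf : ∀ beta, 0 ≤ beta → 0 < f beta ∧ Fnec lam cbar cB alpha (f beta) beta = 0)
    (R₁ : ℝ) (hR₁pos : 0 < R₁)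
    (hR₁ : Real.cosh (Real.sqrt lam * (1 - alpha) * R₁) / Real.cosh (Real.sqrt lam * R₁)
      = cbar / cB) :
    f 0 = R₁ ∧ ∀ beta₁ beta₂, 0 ≤ beta₁ → beta₁ < beta₂ → f beta₂ < f beta₁ := by
  obtain ⟨hα0, hα1⟩ := halpha
  have ha : 0 < Real.sqrt lam := Real.sqrt_pos.mpr hlam
  have hb : 0 < Real.sqrt lam * (1 - alpha) := mul_pos ha (by linarith)
  have hba : Real.sqrt lam * (1 - alpha) < Real.sqrt lam := by nlinarith
  have hcB : (0 : ℝ) < cB := hcbar.trans hc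
  have hk : 0 < cbar / cB := div_pos hcbar hcB
  have hR₁' : Real.cosh (Real.sqrt lam * (1 - alpha) * R₁)
      = cbar / cB * Real.cosh (Real.sqrt lam * R₁) := by
    field_simp at hR₁ ⊢
    linarith [hR₁]
  apply main_aux (Real.sqrt lam) (Real.sqrt lam * (1 - alpha)) (cbar / cB) hb hba hk f ?_
    R₁ hR₁pos hR₁'
  intro beta hbeta
  obtain ⟨hp, he⟩ := hf beta hbeta
  refine ⟨hp, ?_⟩
  unfold Fnec at he
  linarith [he]
end

section
/- Let λ > 0, 0 < c̄ < c_B, α ∈ (0,1), n_c ∈ (0,1), and R > 0. The nonlinear system F(R̄, β) = 0, β = √n_c · tanh(√λ · r), r + R̄ = R has a solution (r, R̄, β) with 0 < r < R if and only if R > R₁, where R₁ > 0 is the unique positive solution of cosh(√λ(1−α)·R₁)/cosh(√λ·R₁) = c̄/c_B. Moreover, when R > R₁ this solution is unique. -/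
/-- Auxiliary: `cosh (m (R - r)) + c tanh (s r) sinh (m (R - r))`. -/
noncomputable def necAux (s m c R r : ℝ) : ℝ :=
  Real.cosh (m * (R - r)) + c * Real.tanh (s * r) * Real.sinh (m * (R - r))

lemma tanh_hasDerivAt' (x : ℝ) : HasDerivAt Real.tanh (1 - Real.tanh x ^ 2) x := by
  have h := (Real.hasDerivAt_sinh x).div (Real.hasDerivAt_cosh x) (Real.cosh_pos x).ne'
  have hfun : (fun y => Real.sinh y / Real.cosh y) = Real.tanh := by
    funext y; rw [Real.tanh_eq_sinh_div_cosh]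
  rw [show (Real.sinh / Real.cosh) = Real.tanh from funext fun y => (Real.tanh_eq_sinh_div_cosh y).symm] at h
  refine h.congr_deriv ?_
  have hc := Real.cosh_pos x
  have hsq := Real.cosh_sq_sub_sinh_sq x
  rw [Real.tanh_eq_sinh_div_cosh]
  field_simp

lemma necAux_hasDerivAt (s m c R x : ℝ) :
    HasDerivAt (fun r => necAux s m c R r)
      (Real.sinh (m * (R - x)) * (-m) +
        (c * ((1 - Real.tanh (s * x) ^ 2) * s) * Real.sinh (m * (R - x)) +
          c * Real.tanh (s * x) * (Real.cosh (m * (R - x)) * (-m)))) x := by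
  have h1 : HasDerivAt (fun r : ℝ => m * (R - r)) (-m) x := by
    simpa using ((hasDerivAt_id x).const_sub R).const_mul m
  have h2 : HasDerivAt (fun r : ℝ => Real.tanh (s * r)) ((1 - Real.tanh (s * x) ^ 2) * s) x := by
    have h3 : HasDerivAt (fun r : ℝ => s * r) s x := by
      simpa using (hasDerivAt_id x).const_mul s
    exact (tanh_hasDerivAt' (s * x)).comp x h3
  have hcosh := h1.cosh
  have hsinh := h1.sinh
  have hprod := (h2.const_mul c).mul hsinh
  have := hcosh.add hprod
  simpa [necAux, mul_assoc, Pi.add_def, Pi.mul_def] using this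

lemma tanh_nonneg' {x : ℝ} (hx : 0 ≤ x) : 0 ≤ Real.tanh x := by
  rw [Real.tanh_eq_sinh_div_cosh]
  exact div_nonneg (by simpa using hx) (Real.cosh_pos x).le

lemma tanh_pos' {x : ℝ} (hx : 0 < x) : 0 < Real.tanh x := by
  rw [Real.tanh_eq_sinh_div_cosh]
  exact div_pos (by simpa using hx) (Real.cosh_pos x)

lemma tanh_lt_one' (x : ℝ) : Real.tanh x < 1 := by
  rw [Real.tanh_eq_sinh_div_cosh, div_lt_one (Real.cosh_pos x)]
  have := Real.cosh_sub_sinh x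
  nlinarith [Real.exp_pos (-x)]

lemma necAux_pos {s c R : ℝ} (hc : 0 ≤ c) {m : ℝ} {x : ℝ} (hsx : 0 ≤ s * x)
    (hmx : 0 ≤ m * (R - x)) : 0 < necAux s m c R x := by
  have h1 : 0 ≤ c * Real.tanh (s * x) * Real.sinh (m * (R - x)) :=
    mul_nonneg (mul_nonneg hc (tanh_nonneg' hsx)) (by simpa using hmx)
  have := Real.cosh_pos (m * (R - x))
  unfold necAux; linarith

/-- Key monotonicity: `φ(r) = N(r)/D(r)` is strictly increasing on `[0, R]`. -/
lemma nec_phi_strictMono {s k c R : ℝ} (hs : 0 < s) (hk0 : 0 < k) (hk1 : k < 1)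
    (hc0 : 0 < c) (hc1 : c < 1) (hR : 0 < R) :
    StrictMonoOn (fun r => necAux s (s * k) c R r / necAux s s c R r) (Set.Icc 0 R) := by
  have hDpos : ∀ x ∈ Set.Icc (0 : ℝ) R, 0 < necAux s s c R x := by
    intro x hx
    exact necAux_pos hc0.le (mul_nonneg hs.le hx.1) (mul_nonneg hs.le (by linarith [hx.2]))
  apply strictMonoOn_of_deriv_pos (convex_Icc 0 R)
  · intro x hx
    exact ((necAux_hasDerivAt s (s * k) c R x).div (necAux_hasDerivAt s s c R x)
      (hDpos x hx).ne').continuousAt.continuousWithinAt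
  · intro x hx
    rw [interior_Icc] at hx
    have hx0 : 0 < x := hx.1
    have hxR : x < R := hx.2
    have hD : 0 < necAux s s c R x :=
      hDpos x ⟨hx0.le, hxR.le⟩
    have hder := (necAux_hasDerivAt s (s * k) c R x).div (necAux_hasDerivAt s s c R x) hD.ne'
    rw [(show HasDerivAt (fun r => necAux s (s * k) c R r / necAux s s c R r) _ x from hder).deriv]
    apply div_pos
    swap
    · positivity
    -- the numerator
    unfold necAux
    set a := Real.sinh (s * k * (R - x)) with ha_def
    set b := Real.cosh (s * k * (R - x)) with hb_def
    set p := Real.sinh (s * (R - x)) with hp_def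
    set q := Real.cosh (s * (R - x)) with hq_def
    set t := Real.tanh (s * x) with ht_def
    have ha : 0 < a := by
      rw [ha_def]; rw [Real.sinh_pos_iff]
      have : 0 < R - x := by linarith
      positivity
    have hp : 0 < p := by
      rw [hp_def]; rw [Real.sinh_pos_iff]
      have : 0 < R - x := by linarith
      positivity
    have hb : 0 < b := Real.cosh_pos _
    have hq : 0 < q := Real.cosh_pos _
    have ht0 : 0 < t := tanh_pos' (by positivity)
    have ht1 : t < 1 := tanh_lt_one' _
    have hpbqa : q * a < p * b := by
      have hid : p * b - q * a = Real.sinh (s * (R - x) - s * k * (R - x)) := by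
        rw [Real.sinh_sub, ha_def, hb_def, hp_def, hq_def]
      have hpos : 0 < Real.sinh (s * (R - x) - s * k * (R - x)) := by
        rw [Real.sinh_pos_iff]
        have h1 : 0 < R - x := by linarith
        have h2 : 0 < 1 - k := by linarith
        nlinarith [mul_pos hs (mul_pos h1 h2)]
      linarith [hid ▸ hpos]
    have hG : 0 < q * a + c * t * (p * a + q * b) + c ^ 2 * t ^ 2 * (p * b) := by
      have e1 : 0 < q * a := mul_pos hq ha
      have e2 : 0 < c * t * (p * a + q * b) :=
        mul_pos (mul_pos hc0 ht0) (add_pos (mul_pos hp ha) (mul_pos hq hb))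
      have e3 : 0 < c ^ 2 * t ^ 2 * (p * b) :=
        mul_pos (mul_pos (pow_pos hc0 2) (pow_pos ht0 2)) (mul_pos hp hb)
      linarith
    have hT1 : 0 < s * (1 - k) * (q * a + c * t * (p * a + q * b) + c ^ 2 * t ^ 2 * (p * b)) :=
      mul_pos (mul_pos hs (by linarith)) hG
    have hT2 : 0 < s * (p * b - q * a) * ((1 - c) * (1 + c * t ^ 2)) := by
      apply mul_pos (mul_pos hs (by linarith))
      apply mul_pos (by linarith)
      nlinarith
    nlinarith [hT1, hT2]

lemma nec_cosh_ratio_lt {s k : ℝ} (hs : 0 < s) (hk0 : 0 < k) (hk1 : k < 1) {x y : ℝ}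
    (hx : 0 ≤ x) (hxy : x < y) :
    Real.cosh (s * k * y) / Real.cosh (s * y) < Real.cosh (s * k * x) / Real.cosh (s * x) := by
  rw [div_lt_div_iff₀ (Real.cosh_pos _) (Real.cosh_pos _)]
  have e1 : Real.cosh (s * k * y) * Real.cosh (s * x) =
      (Real.cosh (s * k * y + s * x) + Real.cosh (s * k * y - s * x)) / 2 := by
    rw [Real.cosh_add, Real.cosh_sub]; ring
  have e2 : Real.cosh (s * k * x) * Real.cosh (s * y) =
      (Real.cosh (s * k * x + s * y) + Real.cosh (s * k * x - s * y)) / 2 := by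
    rw [Real.cosh_add, Real.cosh_sub]; ring
  have hy : 0 < y := lt_of_le_of_lt hx hxy
  have c1 : Real.cosh (s * k * y + s * x) < Real.cosh (s * k * x + s * y) := by
    rw [Real.cosh_lt_cosh]
    rw [abs_of_nonneg (by positivity), abs_of_nonneg (by
      nlinarith [mul_nonneg (mul_nonneg hs.le hk0.le) hx, mul_pos hs hy])]
    nlinarith [mul_pos (mul_pos hs (show (0:ℝ) < 1 - k by linarith))
      (show (0:ℝ) < y - x by linarith)]
  have c2 : Real.cosh (s * k * y - s * x) < Real.cosh (s * k * x - s * y) := by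
    rw [Real.cosh_lt_cosh]
    have habs2 : |s * k * x - s * y| = s * y - s * k * x := by
      rw [abs_of_nonpos (by
        nlinarith [mul_nonneg (mul_nonneg hs.le (show (0:ℝ) ≤ 1 - k by linarith)) hx,
          mul_pos hs (show (0:ℝ) < y - x by linarith)])]; ring
    rw [habs2, abs_lt]
    constructor
    · nlinarith [mul_pos (mul_pos hs (show (0:ℝ) < 1 + k by linarith))
        (show (0:ℝ) < y - x by linarith)]
    · nlinarith [mul_pos (mul_pos hs (show (0:ℝ) < 1 - k by linarith))
        (show (0:ℝ) < x + y by linarith)]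
  linarith [e1 ▸ e2 ▸ (by linarith [c1, c2] :
    (Real.cosh (s * k * y + s * x) + Real.cosh (s * k * y - s * x)) / 2 <
      (Real.cosh (s * k * x + s * y) + Real.cosh (s * k * x - s * y)) / 2)]

/-- The nonlinear system `F(R̄, β) = 0`, `β = √n_c tanh(√λ r)`, `r + R̄ = R` has a
solution with `0 < r < R` if and only if `R > R₁`; moreover, for `R > R₁` the solution
is unique. -/
theorem stmt_8 (lam cbar cB alpha n_c R R₁ : ℝ) (hlam : 0 < lam) (hcbar : 0 < cbar)
    (hc : cbar < cB) (halpha : alpha ∈ Set.Ioo (0 : ℝ) 1) (hn_c : n_c ∈ Set.Ioo (0 : ℝ) 1)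
    (hR : 0 < R) (hR₁pos : 0 < R₁)
    (hR₁ : Real.cosh (Real.sqrt lam * (1 - alpha) * R₁) / Real.cosh (Real.sqrt lam * R₁)
      = cbar / cB) :
    ((∃ r Rbar beta : ℝ, 0 < r ∧ r < R ∧ Fnec lam cbar cB alpha Rbar beta = 0 ∧
        beta = Real.sqrt n_c * Real.tanh (Real.sqrt lam * r) ∧ r + Rbar = R) ↔ R₁ < R) ∧
    (R₁ < R → ∀ r Rbar beta r' Rbar' beta' : ℝ,
      (0 < r ∧ r < R ∧ Fnec lam cbar cB alpha Rbar beta = 0 ∧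
        beta = Real.sqrt n_c * Real.tanh (Real.sqrt lam * r) ∧ r + Rbar = R) →
      (0 < r' ∧ r' < R ∧ Fnec lam cbar cB alpha Rbar' beta' = 0 ∧
        beta' = Real.sqrt n_c * Real.tanh (Real.sqrt lam * r') ∧ r' + Rbar' = R) →
      r = r' ∧ Rbar = Rbar' ∧ beta = beta') := by
  obtain ⟨ha0, ha1⟩ := halpha
  obtain ⟨hn0, hn1⟩ := hn_c
  have hcB : 0 < cB := hcbar.trans hc
  set s : ℝ := Real.sqrt lam with hs_def
  set k : ℝ := 1 - alpha with hk_def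
  set c : ℝ := Real.sqrt n_c with hc_def
  have hs : 0 < s := Real.sqrt_pos.2 hlam
  have hk0 : 0 < k := by rw [hk_def]; linarith
  have hk1 : k < 1 := by rw [hk_def]; linarith
  have hc0 : 0 < c := Real.sqrt_pos.2 hn0
  have hc1 : c < 1 := by
    have := Real.sqrt_lt_sqrt hn0.le hn1
    rwa [Real.sqrt_one] at this
  have hratio1 : cbar / cB < 1 := (div_lt_one hcB).2 hc
  set φ : ℝ → ℝ := fun r => necAux s (s * k) c R r / necAux s s c R r with hφ_def
  have hmono : StrictMonoOn φ (Set.Icc 0 R) := nec_phi_strictMono hs hk0 hk1 hc0 hc1 hR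
  have hDpos : ∀ x ∈ Set.Icc (0 : ℝ) R, 0 < necAux s s c R x := by
    intro x hx
    exact necAux_pos hc0.le (mul_nonneg hs.le hx.1) (mul_nonneg hs.le (by linarith [hx.2]))
  have hφ0 : φ 0 = Real.cosh (s * k * R) / Real.cosh (s * R) := by
    simp [hφ_def, necAux, Real.tanh_zero]
  have hφR : φ R = 1 := by
    simp [hφ_def, necAux]
  -- solutions of the system correspond to `φ r = cbar / cB`
  have hsol : ∀ r : ℝ, 0 < r → r < R →
      (Fnec lam cbar cB alpha (R - r) (c * Real.tanh (s * r)) = 0 ↔ φ r = cbar / cB) := by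
    intro r hr0 hrR
    have hD : 0 < necAux s s c R r := hDpos r ⟨hr0.le, hrR.le⟩
    have hFnec : Fnec lam cbar cB alpha (R - r) (c * Real.tanh (s * r)) =
        cbar / cB * necAux s s c R r - necAux s (s * k) c R r := by
      simp only [Fnec, necAux, hs_def, hk_def, hc_def]
    rw [hFnec, hφ_def]
    constructor
    · intro h
      rw [div_eq_iff hD.ne']
      linarith
    · intro h
      rw [div_eq_iff hD.ne'] at h
      linarith
  have hR₁' : Real.cosh (s * k * R₁) / Real.cosh (s * R₁) = cbar / cB := hR₁
  constructor
  · constructor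
    · rintro ⟨r, Rbar, beta, hr0, hrR, hF, hbeta, hsum⟩
      have hRb : Rbar = R - r := by linarith
      rw [hRb, hbeta] at hF
      have hφr : φ r = cbar / cB := (hsol r hr0 hrR).1 hF
      have h0r : φ 0 < φ r :=
        hmono ⟨le_refl 0, hR.le⟩ ⟨hr0.le, hrR.le⟩ hr0
      rw [hφ0, hφr, ← hR₁'] at h0r
      by_contra hcon
      push_neg at hcon
      rcases lt_or_eq_of_le hcon with hlt | heq
      · have := nec_cosh_ratio_lt hs hk0 hk1 hR.le hlt
        linarith
      · rw [heq] at h0r; linarith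
    · intro hRR₁
      have hlt : Real.cosh (s * k * R) / Real.cosh (s * R) < cbar / cB := by
        have := nec_cosh_ratio_lt hs hk0 hk1 hR₁pos.le hRR₁
        linarith [hR₁']
      have hcont : ContinuousOn φ (Set.Icc 0 R) := by
        intro x hx
        exact ((necAux_hasDerivAt s (s * k) c R x).div (necAux_hasDerivAt s s c R x)
          (hDpos x hx).ne').continuousAt.continuousWithinAt
      have hmem : cbar / cB ∈ Set.Ioo (φ 0) (φ R) := by
        rw [hφ0, hφR]; exact ⟨hlt, hratio1⟩
      obtain ⟨r, hrmem, hφr⟩ := intermediate_value_Ioo hR.le hcont hmem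
      refine ⟨r, R - r, c * Real.tanh (s * r), hrmem.1, hrmem.2, ?_, rfl, by ring⟩
      exact (hsol r hrmem.1 hrmem.2).2 hφr
  · intro _ r Rbar beta r' Rbar' beta' ⟨hr0, hrR, hF, hbeta, hsum⟩ ⟨hr0', hrR', hF', hbeta', hsum'⟩
    have hRb : Rbar = R - r := by linarith
    have hRb' : Rbar' = R - r' := by linarith
    rw [hRb, hbeta] at hF
    rw [hRb', hbeta'] at hF'
    have hφr : φ r = cbar / cB := (hsol r hr0 hrR).1 hF
    have hφr' : φ r' = cbar / cB := (hsol r' hr0' hrR').1 hF'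
    have hrr' : r = r' :=
      hmono.injOn ⟨hr0.le, hrR.le⟩ ⟨hr0'.le, hrR'.le⟩ (hφr.trans hφr'.symm)
    refine ⟨hrr', by rw [hRb, hRb', hrr'], by rw [hbeta, hbeta', hrr']⟩
end

section
/- Let λ > 0, 0 < c̄ < c_B, α ∈ (0,1), n_c ∈ (0,1). For each R > R₁ let (r(R), R̄(R), β(R)) denote the unique solution with 0 < r(R) < R of the system F(R̄, β) = 0, β = √n_c · tanh(√λ · r), r + R̄ = R. Then r(R) is strictly increasing on (R₁, ∞) with r(R) → 0 as R → R₁⁺, and R̄(R) = R − r(R) is strictly decreasing on (R₁, ∞). -/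
open Real

/-- product-to-sum for cosh -/
lemma cosh_mul_cosh' (p q : ℝ) : 2 * (Real.cosh p * Real.cosh q) = Real.cosh (p + q) + Real.cosh (p - q) := by
  rw [Real.cosh_add, Real.cosh_sub]; ring

lemma coshprod {y y' d : ℝ} (hyy : y < y') (hd : 0 < d) :
    Real.cosh (y + d) * Real.cosh y' < Real.cosh (y' + d) * Real.cosh y := by
  have h1 := cosh_mul_cosh' (y + d) y'
  have h2 := cosh_mul_cosh' (y' + d) y
  have hkey : Real.cosh (y + d - y') < Real.cosh (y' + d - y) := by
    rw [Real.cosh_lt_cosh]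
    rw [abs_of_pos (by linarith : (0:ℝ) < y' + d - y)]
    rw [abs_lt]; constructor <;> linarith
  have hpq : (y + d) + y' = (y' + d) + y := by ring
  rw [hpq] at h1
  linarith

lemma contra_psi {c y y' x x' : ℝ} (hc : 0 < c) (hy : 0 < y) (hyy : y < y') (hyx : y < x)
    (hdd : x - y ≤ x' - y')
    (e : Real.cosh y = c * Real.cosh x) (e' : Real.cosh y' = c * Real.cosh x') : False := by
  have hd : 0 < x - y := by linarith
  have h1 : Real.cosh (y + (x - y)) * Real.cosh y' < Real.cosh (y' + (x - y)) * Real.cosh y :=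
    coshprod hyy hd
  have h2 : Real.cosh (y' + (x - y)) ≤ Real.cosh x' := by
    rw [Real.cosh_le_cosh]
    have h0 : 0 < y' + (x - y) := by linarith
    rw [abs_of_pos h0]
    have : y' + (x - y) ≤ x' := by linarith
    exact this.trans (le_abs_self x')
  have h3 : Real.cosh x * Real.cosh y' < Real.cosh x' * Real.cosh y := by
    have := mul_le_mul_of_nonneg_right h2 (Real.cosh_pos y).le
    have hx : y + (x - y) = x := by ring
    rw [hx] at h1
    linarith
  have h4 := mul_lt_mul_of_pos_left h3 hc
  nlinarith [h4, e, e', Real.cosh_pos y, Real.cosh_pos y', Real.cosh_pos x, Real.cosh_pos x']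

/-- key slope lemma: `s - s' < u - u'` along `tanh s = k tanh u`. -/
lemma lemB {k u u' s s' : ℝ} (hk0 : 0 ≤ k) (hk1 : k < 1) (hu' : 0 ≤ u') (huu : u' < u)
    (hs : Real.cosh u * Real.sinh s = k * Real.sinh u * Real.cosh s)
    (hs' : Real.cosh u' * Real.sinh s' = k * Real.sinh u' * Real.cosh s') :
    u' - s' < u - s := by
  have hCu := Real.cosh_pos u
  have hCu' := Real.cosh_pos u'
  have h1 : Real.sinh s = k * Real.sinh u * Real.cosh s / Real.cosh u := by
    field_simp; linarith [hs]
  have h1' : Real.sinh s' = k * Real.sinh u' * Real.cosh s' / Real.cosh u' := by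
    field_simp; linarith [hs']
  have main : Real.sinh ((u - s) - (u' - s')) * (Real.cosh u * Real.cosh u') =
      (1 - k) * Real.cosh s * Real.cosh s' * Real.sinh (u - u') *
        (Real.cosh u * Real.cosh u' + k * Real.sinh u * Real.sinh u') := by
    rw [Real.sinh_sub ((u - s)) ((u' - s')), Real.sinh_sub u u', Real.sinh_sub u s,
      Real.cosh_sub u s, Real.sinh_sub u' s', Real.cosh_sub u' s', h1, h1']
    field_simp
    ring
  have hSu : 0 < Real.sinh u := Real.sinh_pos_iff.mpr (lt_of_le_of_lt hu' huu)
  have hSu' : 0 ≤ Real.sinh u' := Real.sinh_nonneg_iff.mpr hu'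
  have hsd : 0 < Real.sinh (u - u') := Real.sinh_pos_iff.mpr (by linarith)
  have hrhs : 0 < (1 - k) * Real.cosh s * Real.cosh s' * Real.sinh (u - u') *
      (Real.cosh u * Real.cosh u' + k * Real.sinh u * Real.sinh u') := by
    have f1 : 0 < 1 - k := by linarith
    have f2 := Real.cosh_pos s
    have f3 := Real.cosh_pos s'
    have f5 : 0 < Real.cosh u * Real.cosh u' + k * Real.sinh u * Real.sinh u' := by
      nlinarith [mul_pos hCu hCu', mul_nonneg (mul_nonneg hk0 hSu.le) hSu']
    positivity
  have hA : 0 < Real.sinh ((u - s) - (u' - s')) := by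
    nlinarith [mul_pos hCu hCu']
  have := Real.sinh_pos_iff.mp hA
  linarith

/-- monotonicity of `s` in `u` along `tanh s = k tanh u`. -/
lemma lemMono {k u u' s s' : ℝ} (hk : 0 < k) (huu : u < u')
    (hs : Real.cosh u * Real.sinh s = k * Real.sinh u * Real.cosh s)
    (hs' : Real.cosh u' * Real.sinh s' = k * Real.sinh u' * Real.cosh s') :
    s < s' := by
  have hCu := Real.cosh_pos u
  have hCu' := Real.cosh_pos u'
  have h1 : Real.sinh s = k * Real.sinh u * Real.cosh s / Real.cosh u := by
    field_simp; linarith [hs]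
  have h1' : Real.sinh s' = k * Real.sinh u' * Real.cosh s' / Real.cosh u' := by
    field_simp; linarith [hs']
  have main : Real.sinh (s' - s) * (Real.cosh u * Real.cosh u') =
      k * Real.cosh s * Real.cosh s' * Real.sinh (u' - u) := by
    rw [Real.sinh_sub s' s, Real.sinh_sub u' u, h1, h1']
    field_simp
  have hsd : 0 < Real.sinh (u' - u) := Real.sinh_pos_iff.mpr (by linarith)
  have hrhs : 0 < k * Real.cosh s * Real.cosh s' * Real.sinh (u' - u) := by
    have f2 := Real.cosh_pos s
    have f3 := Real.cosh_pos s'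
    positivity
  have hA : 0 < Real.sinh (s' - s) := by nlinarith [mul_pos hCu hCu']
  linarith [Real.sinh_pos_iff.mp hA]

lemma contra1 {a b c k r r' Rb Rb' s s' : ℝ} (hb : 0 < b) (hba : b < a) (hc : 0 < c)
    (hk0 : 0 ≤ k) (hk1 : k < 1) (hr' : 0 ≤ r') (hrr : r' < r) (hRb : 0 < Rb) (hRR : Rb < Rb')
    (hsum : r + Rb ≤ r' + Rb') (hs0 : 0 ≤ s) (hs0' : 0 ≤ s')
    (hrel : Real.cosh (a * r) * Real.sinh s = k * Real.sinh (a * r) * Real.cosh s)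
    (hrel' : Real.cosh (a * r') * Real.sinh s' = k * Real.sinh (a * r') * Real.cosh s')
    (e : Real.cosh (b * Rb + s) = c * Real.cosh (a * Rb + s))
    (e' : Real.cosh (b * Rb' + s') = c * Real.cosh (a * Rb' + s')) : False := by
  have ha : 0 < a := hb.trans hba
  rcases lt_or_ge (b * Rb + s) (b * Rb' + s') with hy | hy
  · refine contra_psi hc (by nlinarith) hy (by nlinarith) ?_ e e'
    nlinarith [mul_le_mul_of_nonneg_left hRR.le (sub_pos.mpr hba).le]
  · -- y' ≤ y : then x' ≤ x, combine with lemB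
    have hy0 : 0 < b * Rb + s := by nlinarith
    have hy0' : 0 ≤ b * Rb' + s' := by nlinarith
    have hcle : Real.cosh (b * Rb' + s') ≤ Real.cosh (b * Rb + s) := by
      rw [Real.cosh_le_cosh, abs_of_nonneg hy0', abs_of_pos hy0]; exact hy
    rw [e, e'] at hcle
    have hxx : Real.cosh (a * Rb' + s') ≤ Real.cosh (a * Rb + s) :=
      le_of_mul_le_mul_left hcle hc
    have hx' : a * Rb' + s' ≤ a * Rb + s := by
      have h0 : 0 ≤ a * Rb' + s' := by nlinarith
      have h1 : 0 ≤ a * Rb + s := by nlinarith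
      rw [Real.cosh_le_cosh, abs_of_nonneg h0, abs_of_nonneg h1] at hxx
      exact hxx
    have hB : a * r' - s' < a * r - s :=
      lemB hk0 hk1 (by positivity) (by nlinarith) hrel hrel'
    nlinarith

/-- explicit inverse hyperbolic tangent -/
noncomputable def sfun (x : ℝ) : ℝ := Real.log ((1 + x) / (1 - x)) / 2

lemma tanh_sfun {x : ℝ} (h0 : 0 ≤ x) (h1 : x < 1) : Real.tanh (sfun x) = x := by
  have hden : 0 < 1 - x := by linarith
  have hx : 0 < (1 + x) / (1 - x) := by positivity
  have hE2 : Real.exp (sfun x) ^ 2 = (1 + x) / (1 - x) := by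
    rw [sq, ← Real.exp_add, sfun]
    rw [show Real.log ((1 + x) / (1 - x)) / 2 + Real.log ((1 + x) / (1 - x)) / 2 =
      Real.log ((1 + x) / (1 - x)) by ring]
    exact Real.exp_log hx
  have hEpos : 0 < Real.exp (sfun x) := Real.exp_pos _
  have h2 : Real.exp (sfun x) ^ 2 * (1 - x) = 1 + x := by
    rw [hE2]; field_simp
  rw [Real.tanh_eq_sinh_div_cosh, Real.sinh_eq, Real.cosh_eq, Real.exp_neg]
  rw [div_eq_iff (by positivity : (Real.exp (sfun x) + (Real.exp (sfun x))⁻¹) / 2 ≠ 0)]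
  field_simp
  nlinarith [h2]

lemma sfun_nonneg {x : ℝ} (h0 : 0 ≤ x) (h1 : x < 1) : 0 ≤ sfun x := by
  have hden : 0 < 1 - x := by linarith
  apply div_nonneg _ (by norm_num : (0:ℝ) ≤ 2)
  apply Real.log_nonneg
  rw [le_div_iff₀ hden]; linarith

lemma sfun_continuousAt {x : ℝ} (h2 : -1 < x) (h1 : x < 1) : ContinuousAt sfun x := by
  have hden : (1 : ℝ) - x ≠ 0 := by intro h; nlinarith
  have hval : (1 + x) / (1 - x) ≠ 0 := by
    apply div_ne_zero (by intro h; nlinarith) hden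
  have hinner : ContinuousAt (fun y : ℝ => (1 + y) / (1 - y)) x :=
    (continuousAt_const.add continuousAt_id).div (continuousAt_const.sub continuousAt_id) hden
  exact (hinner.log hval).div_const 2

lemma tanh_rel {k u s : ℝ} (h : Real.tanh s = k * Real.tanh u) :
    Real.cosh u * Real.sinh s = k * Real.sinh u * Real.cosh s := by
  rw [Real.tanh_eq_sinh_div_cosh, Real.tanh_eq_sinh_div_cosh] at h
  have h1 := (Real.cosh_pos s).ne'
  have h2 := (Real.cosh_pos u).ne'
  field_simp at h
  linarith [h]

lemma tanh_nonneg_lt_one {t : ℝ} (ht : 0 ≤ t) : 0 ≤ Real.tanh t ∧ Real.tanh t < 1 := by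
  rw [Real.tanh_eq_sinh_div_cosh]
  constructor
  · apply div_nonneg (Real.sinh_nonneg_iff.mpr ht) (Real.cosh_pos t).le
  · rw [div_lt_one (Real.cosh_pos t)]
    have := Real.cosh_sub_sinh t
    have := Real.exp_pos (-t)
    linarith

lemma continuous_tanh' : Continuous Real.tanh := by
  have : Real.tanh = fun x => Real.sinh x / Real.cosh x := funext Real.tanh_eq_sinh_div_cosh
  rw [this]
  exact Real.continuous_sinh.div Real.continuous_cosh fun x => (Real.cosh_pos x).ne'

lemma curve_convert {c A B s : ℝ}
    (h : c * (Real.cosh A + Real.tanh s * Real.sinh A) -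
      (Real.cosh B + Real.tanh s * Real.sinh B) = 0) :
    Real.cosh (B + s) = c * Real.cosh (A + s) := by
  have hcs := (Real.cosh_pos s).ne'
  rw [Real.tanh_eq_sinh_div_cosh] at h
  rw [Real.cosh_add, Real.cosh_add]
  field_simp at h
  linarith [h]

set_option maxHeartbeats 1000000 in
/-- For `R > R₁`, let `r R` be the necrotic core radius solving the nonlinear system
(with `R̄ = R - r R` and `β = √n_c tanh(√λ r R)`).  Then `r` is strictly increasing on
`(R₁, ∞)` with `r(R) → 0` as `R → R₁⁺`, and `R̄(R) = R - r(R)` is strictly decreasing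
on `(R₁, ∞)`. -/
theorem stmt_9 (lam cbar cB alpha n_c R₁ : ℝ) (hlam : 0 < lam) (hcbar : 0 < cbar)
    (hc : cbar < cB) (halpha : alpha ∈ Set.Ioo (0 : ℝ) 1) (hn_c : n_c ∈ Set.Ioo (0 : ℝ) 1)
    (hR₁pos : 0 < R₁)
    (hR₁ : Real.cosh (Real.sqrt lam * (1 - alpha) * R₁) / Real.cosh (Real.sqrt lam * R₁)
      = cbar / cB)
    (r : ℝ → ℝ)
    (hr : ∀ R, R₁ < R → 0 < r R ∧ r R < R ∧
      Fnec lam cbar cB alpha (R - r R)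
        (Real.sqrt n_c * Real.tanh (Real.sqrt lam * r R)) = 0) :
    StrictMonoOn r (Set.Ioi R₁) ∧
    Filter.Tendsto r (nhdsWithin R₁ (Set.Ioi R₁)) (nhds 0) ∧
    StrictAntiOn (fun R => R - r R) (Set.Ioi R₁) := by
  obtain ⟨ha0, ha1⟩ := halpha
  obtain ⟨hn0, hn1⟩ := hn_c
  have haa : 0 < Real.sqrt lam := Real.sqrt_pos.mpr hlam
  have hb0 : 0 < Real.sqrt lam * (1 - alpha) := by nlinarith
  have hba : Real.sqrt lam * (1 - alpha) < Real.sqrt lam := by nlinarith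
  have hcB : 0 < cB := hcbar.trans hc
  have hc0 : 0 < cbar / cB := div_pos hcbar hcB
  have hc1 : cbar / cB < 1 := (div_lt_one hcB).mpr hc
  have hk0 : 0 < Real.sqrt n_c := Real.sqrt_pos.mpr hn0
  have hk1 : Real.sqrt n_c < 1 := by
    have := Real.sqrt_lt_sqrt hn0.le hn1
    rwa [Real.sqrt_one] at this
  set S : ℝ → ℝ := fun ρ => sfun (Real.sqrt n_c * Real.tanh (Real.sqrt lam * ρ)) with hS_def
  have hβ : ∀ ρ : ℝ, 0 ≤ ρ → 0 ≤ Real.sqrt n_c * Real.tanh (Real.sqrt lam * ρ) ∧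
      Real.sqrt n_c * Real.tanh (Real.sqrt lam * ρ) < 1 := by
    intro ρ hρ
    obtain ⟨ht0, ht1⟩ := tanh_nonneg_lt_one (by positivity : (0:ℝ) ≤ Real.sqrt lam * ρ)
    exact ⟨by positivity, by nlinarith⟩
  have hStanh : ∀ ρ : ℝ, 0 ≤ ρ →
      Real.tanh (S ρ) = Real.sqrt n_c * Real.tanh (Real.sqrt lam * ρ) := by
    intro ρ hρ
    obtain ⟨h1, h2⟩ := hβ ρ hρ
    exact tanh_sfun h1 h2
  have hSrel : ∀ ρ : ℝ, 0 ≤ ρ →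
      Real.cosh (Real.sqrt lam * ρ) * Real.sinh (S ρ) =
        Real.sqrt n_c * Real.sinh (Real.sqrt lam * ρ) * Real.cosh (S ρ) := by
    intro ρ hρ
    exact tanh_rel (hStanh ρ hρ)
  have hSnn : ∀ ρ : ℝ, 0 ≤ ρ → 0 ≤ S ρ := by
    intro ρ hρ
    obtain ⟨h1, h2⟩ := hβ ρ hρ
    exact sfun_nonneg h1 h2
  have hfacts : ∀ R, R₁ < R → 0 < r R ∧ r R < R := fun R hR => ⟨(hr R hR).1, (hr R hR).2.1⟩
  have hcurve : ∀ R, R₁ < R →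
      Real.cosh (Real.sqrt lam * (1 - alpha) * (R - r R) + S (r R)) =
        cbar / cB * Real.cosh (Real.sqrt lam * (R - r R) + S (r R)) := by
    intro R hR
    obtain ⟨h1, h2, h3⟩ := hr R hR
    unfold Fnec at h3
    rw [← hStanh (r R) h1.le] at h3
    exact curve_convert h3
  -- Part 1 : strict monotonicity of r
  have part1 : StrictMonoOn r (Set.Ioi R₁) := by
    intro R hR R' hR' hRR'
    simp only [Set.mem_Ioi] at hR hR'
    obtain ⟨hr1, hr2⟩ := hfacts R hR
    obtain ⟨hr1', hr2'⟩ := hfacts R' hR'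
    by_contra hcon
    push_neg at hcon
    rcases eq_or_lt_of_le hcon with heq | hlt
    · -- r R' = r R : same s, bigger R̄', contra_psi
      have hs_eq : S (r R') = S (r R) := by rw [heq]
      have hRb : R - r R < R' - r R' := by rw [heq]; linarith
      have hRb0 : (0:ℝ) < R - r R := by linarith
      refine contra_psi hc0
        (y := Real.sqrt lam * (1 - alpha) * (R - r R) + S (r R))
        (x := Real.sqrt lam * (R - r R) + S (r R))
        (y' := Real.sqrt lam * (1 - alpha) * (R' - r R') + S (r R'))
        (x' := Real.sqrt lam * (R' - r R') + S (r R'))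
        ?_ ?_ ?_ ?_ (hcurve R hR) (hcurve R' hR')
      · linarith [hSnn (r R) hr1.le, mul_pos hb0 hRb0]
      · have h := mul_lt_mul_of_pos_left hRb hb0
        rw [hs_eq]; linarith
      · linarith [mul_pos (sub_pos.mpr hba) hRb0]
      · have h := mul_le_mul_of_nonneg_left hRb.le (sub_pos.mpr hba).le
        linarith [h]
    · -- r R' < r R : use contra1
      exact contra1 hb0 hba hc0 hk0.le hk1 hr1'.le hlt
        (show (0:ℝ) < R - r R by linarith)
        (show R - r R < R' - r R' by linarith)
        (show r R + (R - r R) ≤ r R' + (R' - r R') by linarith)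
        (hSnn (r R) hr1.le) (hSnn (r R') hr1'.le)
        (hSrel (r R) hr1.le) (hSrel (r R') hr1'.le)
        (hcurve R hR) (hcurve R' hR')
  refine ⟨part1, ?_, ?_⟩
  · -- Part 2 : the limit
    have hmono : MonotoneOn r (Set.Ioi R₁) := part1.monotoneOn
    have hbdd : BddBelow (r '' Set.Ioi R₁) := by
      refine ⟨0, ?_⟩
      rintro x ⟨R, hR, rfl⟩
      exact (hfacts R hR).1.le
    set L := sInf (r '' Set.Ioi R₁) with hL_def
    have htends : Filter.Tendsto r (nhdsWithin R₁ (Set.Ioi R₁)) (nhds L) :=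
      hmono.tendsto_nhdsGT hbdd
    suffices hL0 : L = 0 by rwa [hL0] at htends
    have hne : (r '' Set.Ioi R₁).Nonempty := ⟨r (R₁ + 1), ⟨R₁ + 1, by simp, rfl⟩⟩
    have hL_nonneg : 0 ≤ L := by
      apply le_csInf hne
      rintro x ⟨R, hR, rfl⟩
      exact (hfacts R hR).1.le
    by_contra hL0
    have hLpos : 0 < L := lt_of_le_of_ne hL_nonneg (Ne.symm hL0)
    have hLle : ∀ R, R₁ < R → L ≤ r R := fun R hR => csInf_le hbdd ⟨R, hR, rfl⟩
    have hLR₁ : L ≤ R₁ := by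
      by_contra hL
      push_neg at hL
      have h1 : R₁ < (R₁ + L) / 2 := by linarith
      have h2 := (hfacts _ h1).2
      have h3 := hLle _ h1
      linarith
    have hidt : Filter.Tendsto (fun R : ℝ => R) (nhdsWithin R₁ (Set.Ioi R₁)) (nhds R₁) :=
      (continuous_id.tendsto R₁).mono_left nhdsWithin_le_nhds
    have hRbar : Filter.Tendsto (fun R => R - r R) (nhdsWithin R₁ (Set.Ioi R₁))
        (nhds (R₁ - L)) := hidt.sub htends
    have hinner : Continuous fun ρ : ℝ => Real.sqrt n_c * Real.tanh (Real.sqrt lam * ρ) :=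
      continuous_const.mul (continuous_tanh'.comp (continuous_const.mul continuous_id))
    have hScont : ContinuousAt S L := by
      obtain ⟨h1, h2⟩ := hβ L hLpos.le
      rw [hS_def]
      exact ContinuousAt.comp (g := sfun)
        (f := fun ρ : ℝ => Real.sqrt n_c * Real.tanh (Real.sqrt lam * ρ))
        (sfun_continuousAt (by exact lt_of_lt_of_le (by norm_num) h1) h2) hinner.continuousAt
    have hStends : Filter.Tendsto (fun R => S (r R)) (nhdsWithin R₁ (Set.Ioi R₁))
        (nhds (S L)) := hScont.tendsto.comp htends
    have T1 : Filter.Tendsto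
        (fun R => Real.cosh (Real.sqrt lam * (1 - alpha) * (R - r R) + S (r R)))
        (nhdsWithin R₁ (Set.Ioi R₁))
        (nhds (Real.cosh (Real.sqrt lam * (1 - alpha) * (R₁ - L) + S L))) :=
      (Real.continuous_cosh.tendsto _).comp
        ((hRbar.const_mul (Real.sqrt lam * (1 - alpha))).add hStends)
    have T2 : Filter.Tendsto
        (fun R => cbar / cB * Real.cosh (Real.sqrt lam * (R - r R) + S (r R)))
        (nhdsWithin R₁ (Set.Ioi R₁))
        (nhds (cbar / cB * Real.cosh (Real.sqrt lam * (R₁ - L) + S L))) :=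
      ((Real.continuous_cosh.tendsto _).comp
        ((hRbar.const_mul (Real.sqrt lam)).add hStends)).const_mul _
    have heqv : ∀ᶠ R in nhdsWithin R₁ (Set.Ioi R₁),
        Real.cosh (Real.sqrt lam * (1 - alpha) * (R - r R) + S (r R)) =
          cbar / cB * Real.cosh (Real.sqrt lam * (R - r R) + S (r R)) := by
      filter_upwards [self_mem_nhdsWithin] with R hR
      exact hcurve R hR
    have eqlim : Real.cosh (Real.sqrt lam * (1 - alpha) * (R₁ - L) + S L) =
        cbar / cB * Real.cosh (Real.sqrt lam * (R₁ - L) + S L) :=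
      tendsto_nhds_unique (T1.congr' heqv) T2
    rcases eq_or_lt_of_le (sub_nonneg.mpr hLR₁) with hu0 | hu0
    · rw [← hu0] at eqlim
      simp only [mul_zero, zero_add] at eqlim
      nlinarith [Real.cosh_pos (S L), eqlim]
    · have eb : Real.cosh (Real.sqrt lam * (1 - alpha) * R₁ + 0) =
          cbar / cB * Real.cosh (Real.sqrt lam * R₁ + 0) := by
        rw [add_zero, add_zero]
        rw [div_eq_iff (Real.cosh_pos (Real.sqrt lam * R₁)).ne'] at hR₁
        linarith [hR₁]
      exact contra1 hb0 hba hc0 hk0.le hk1 le_rfl hLpos hu0 (by linarith)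
        (by linarith) (hSnn L hLpos.le) le_rfl (hSrel L hLpos.le)
        (by simp) eqlim eb
  · -- Part 3 : strict antitonicity of R̄
    intro R hR R' hR' hRR'
    simp only [Set.mem_Ioi] at hR hR'
    obtain ⟨hr1, hr2⟩ := hfacts R hR
    obtain ⟨hr1', hr2'⟩ := hfacts R' hR'
    have hrlt : r R < r R' := part1 hR hR' hRR'
    show R' - r R' < R - r R
    by_contra hcon
    push_neg at hcon
    have hRb0 : (0:ℝ) < R - r R := by linarith
    rcases lt_or_ge (Real.sqrt lam * (1 - alpha) * (R - r R) + S (r R))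
        (Real.sqrt lam * (1 - alpha) * (R' - r R') + S (r R')) with hy | hy
    · refine contra_psi hc0
        (y := Real.sqrt lam * (1 - alpha) * (R - r R) + S (r R))
        (x := Real.sqrt lam * (R - r R) + S (r R))
        (y' := Real.sqrt lam * (1 - alpha) * (R' - r R') + S (r R'))
        (x' := Real.sqrt lam * (R' - r R') + S (r R'))
        ?_ hy ?_ ?_ (hcurve R hR) (hcurve R' hR')
      · linarith [hSnn (r R) hr1.le, mul_pos hb0 hRb0]
      · linarith [mul_pos (sub_pos.mpr hba) hRb0]
      · have h := mul_le_mul_of_nonneg_left hcon (sub_pos.mpr hba).le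
        linarith [h]
    · have hss : S (r R) < S (r R') := by
        exact lemMono hk0 (mul_lt_mul_of_pos_left hrlt haa)
          (hSrel (r R) hr1.le) (hSrel (r R') hr1'.le)
      have h := mul_le_mul_of_nonneg_left hcon hb0.le
      linarith
end

section
/- Let λ > 0, 0 < c̄ < c_B, α ∈ (0,1), n_c ∈ (0,1). For each R > R₁ let (r(R), R̄(R), β(R)) denote the unique solution with 0 < r(R) < R of the system F(R̄, β) = 0, β = √n_c · tanh(√λ · r), r + R̄ = R. Then as R → +∞, r(R) → +∞ and R̄(R) → f(√n_c), where f(√n_c) > 0 is the unique positive root R̄ of F(R̄, √n_c) = 0. -/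
/-- `hfnAux b t = cosh t + b sinh t`. -/
noncomputable def hfnAux (b t : ℝ) : ℝ := Real.cosh t + b * Real.sinh t

lemma hfnAux_pos {b : ℝ} (hb0 : 0 ≤ b) (hb1 : b ≤ 1) (t : ℝ) : 0 < hfnAux b t := by
  have h1 := Real.cosh_pos t
  have h2 := Real.exp_pos t
  have h3 := Real.cosh_add_sinh t
  unfold hfnAux
  rcases le_or_gt 0 (Real.sinh t) with h | h
  · nlinarith [mul_nonneg hb0 h]
  · nlinarith [mul_le_mul_of_nonpos_right hb1 h.le]

lemma hfnAux_one_le {b t : ℝ} (hb0 : 0 ≤ b) (ht : 0 ≤ t) : 1 ≤ hfnAux b t := by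
  have h1 := Real.one_le_cosh t
  have h2 : 0 ≤ Real.sinh t := Real.sinh_nonneg_iff.2 ht
  unfold hfnAux
  nlinarith

lemma hfnAux_hasDeriv (b c x : ℝ) :
    HasDerivAt (fun y => hfnAux b (c * y)) (c * (Real.sinh (c * x) + b * Real.cosh (c * x))) x := by
  have h1 : HasDerivAt (fun y : ℝ => c * y) c x := by
    simpa using (hasDerivAt_id x).const_mul c
  have h2 := (Real.hasDerivAt_cosh (c * x)).comp x h1
  have h3 := ((Real.hasDerivAt_sinh (c * x)).comp x h1).const_mul b
  have h4 := h2.add h3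
  have : Real.sinh (c * x) * c + b * (Real.cosh (c * x) * c)
      = c * (Real.sinh (c * x) + b * Real.cosh (c * x)) := by ring
  rw [this] at h4
  exact h4

/-- Strict antitonicity of `x ↦ (cosh(ax)+b sinh(ax))/(cosh(sx)+b sinh(sx))` on `[0,∞)`. -/
lemma phiAux_anti {a s b : ℝ} (ha : 0 < a) (has : a < s) (hb0 : 0 < b) (hb1 : b < 1) :
    StrictAntiOn (fun x => hfnAux b (a * x) / hfnAux b (s * x)) (Set.Ici 0) := by
  have hDpos : ∀ x : ℝ, 0 < hfnAux b (s * x) := fun x => hfnAux_pos hb0.le hb1.le _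
  have hder : ∀ x : ℝ, HasDerivAt (fun x => hfnAux b (a * x) / hfnAux b (s * x))
      ((a * (Real.sinh (a * x) + b * Real.cosh (a * x)) * hfnAux b (s * x)
        - hfnAux b (a * x) * (s * (Real.sinh (s * x) + b * Real.cosh (s * x))))
        / hfnAux b (s * x) ^ 2) x := by
    intro x
    exact (hfnAux_hasDeriv b a x).div (hfnAux_hasDeriv b s x) (hDpos x).ne'
  apply strictAntiOn_of_deriv_neg (convex_Ici 0)
  · exact fun x _ => ((hder x).differentiableAt.continuousAt).continuousWithinAt
  · intro x hx
    rw [interior_Ici] at hx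
    rw [(hder x).deriv]
    apply div_neg_of_neg_of_pos _ (pow_pos (hDpos x) 2)
    set A := a * x with hA
    set S := s * x with hS
    have hApos : 0 < A := mul_pos ha hx
    have hAS : A < S := by
      simp only [hA, hS]
      exact mul_lt_mul_of_pos_right has hx
    have hsinhA : 0 < Real.sinh A := Real.sinh_pos_iff.2 hApos
    have hsinhS : 0 < Real.sinh S := Real.sinh_pos_iff.2 (hApos.trans hAS)
    have hcoshA := Real.cosh_pos A
    have hcoshS := Real.cosh_pos S
    have hI1pos : 0 < (Real.sinh A + b * Real.cosh A) * (Real.cosh S + b * Real.sinh S) := by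
      positivity
    have hsd : 0 < Real.sinh (S - A) := Real.sinh_pos_iff.2 (by linarith)
    have hkey : (Real.cosh A + b * Real.sinh A) * (Real.sinh S + b * Real.cosh S)
        - (Real.sinh A + b * Real.cosh A) * (Real.cosh S + b * Real.sinh S)
        = (1 - b ^ 2) * Real.sinh (S - A) := by
      rw [Real.sinh_sub]; ring
    have hb2 : 0 < 1 - b ^ 2 := by nlinarith
    have hI12 : (Real.sinh A + b * Real.cosh A) * (Real.cosh S + b * Real.sinh S)
        < (Real.cosh A + b * Real.sinh A) * (Real.sinh S + b * Real.cosh S) := by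
      nlinarith [mul_pos hb2 hsd]
    have hgoal : a * ((Real.sinh A + b * Real.cosh A) * (Real.cosh S + b * Real.sinh S))
        < s * ((Real.cosh A + b * Real.sinh A) * (Real.sinh S + b * Real.cosh S)) := by
      calc a * ((Real.sinh A + b * Real.cosh A) * (Real.cosh S + b * Real.sinh S))
          < s * ((Real.sinh A + b * Real.cosh A) * (Real.cosh S + b * Real.sinh S)) :=
            mul_lt_mul_of_pos_right has hI1pos
        _ < s * ((Real.cosh A + b * Real.sinh A) * (Real.sinh S + b * Real.cosh S)) :=
            mul_lt_mul_of_pos_left hI12 (ha.trans has)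
    simp only [hfnAux]
    nlinarith [hgoal]

set_option maxHeartbeats 2000000 in
/-- For `R > R₁`, let `r R` be the necrotic core radius solving the nonlinear system
(with `R̄ = R - r R` and `β = √n_c tanh(√λ r R)`).  Then as `R → +∞`, `r(R) → +∞` and
`R̄(R) = R - r(R) → f(√n_c)`, where `f(√n_c) > 0` is the unique positive root `R̄` of
`F(R̄, √n_c) = 0`. -/
theorem stmt_10 (lam cbar cB alpha n_c R₁ : ℝ) (hlam : 0 < lam) (hcbar : 0 < cbar)
    (hc : cbar < cB) (halpha : alpha ∈ Set.Ioo (0 : ℝ) 1) (hn_c : n_c ∈ Set.Ioo (0 : ℝ) 1)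
    (hR₁pos : 0 < R₁)
    (hR₁ : Real.cosh (Real.sqrt lam * (1 - alpha) * R₁) / Real.cosh (Real.sqrt lam * R₁)
      = cbar / cB)
    (r : ℝ → ℝ)
    (hr : ∀ R, R₁ < R → 0 < r R ∧ r R < R ∧
      Fnec lam cbar cB alpha (R - r R)
        (Real.sqrt n_c * Real.tanh (Real.sqrt lam * r R)) = 0)
    (fstar : ℝ) (hfstarpos : 0 < fstar)
    (hfstar : Fnec lam cbar cB alpha fstar (Real.sqrt n_c) = 0) :
    Filter.Tendsto r Filter.atTop Filter.atTop ∧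
    Filter.Tendsto (fun R => R - r R) Filter.atTop (nhds fstar) := by
  obtain ⟨ha0, ha1⟩ := halpha
  obtain ⟨hn0, hn1⟩ := hn_c
  have hcB : 0 < cB := hcbar.trans hc
  set s := Real.sqrt lam with hsdef
  have hs : 0 < s := Real.sqrt_pos.2 hlam
  set a := s * (1 - alpha) with hadef
  have ha : 0 < a := mul_pos hs (by linarith)
  have has : a < s := by
    have : a = s - s * alpha := by rw [hadef]; ring
    nlinarith [mul_pos hs ha0]
  set b := Real.sqrt n_c with hbdef
  have hb0 : 0 < b := Real.sqrt_pos.2 hn0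
  have hb1 : b < 1 := by
    nlinarith [Real.sq_sqrt hn0.le, Real.sqrt_nonneg n_c]
  set q := cbar / cB with hqdef
  have hq0 : 0 < q := div_pos hcbar hcB
  have hq1 : q < 1 := (div_lt_one hcB).2 hc
  have hF : ∀ x β : ℝ, Fnec lam cbar cB alpha x β = q * hfnAux β (s * x) - hfnAux β (a * x) := by
    intro x β
    simp only [Fnec, hfnAux, hqdef, hadef, ← hsdef, mul_assoc]
  -- β bounds
  have htanh_lt_one : ∀ u : ℝ, Real.tanh u < 1 := by
    intro u
    rw [Real.tanh_eq_sinh_div_cosh, div_lt_one (Real.cosh_pos u)]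
    nlinarith [Real.cosh_sub_sinh u, Real.exp_pos (-u)]
  have htanh_pos : ∀ u : ℝ, 0 < u → 0 < Real.tanh u := by
    intro u hu
    rw [Real.tanh_eq_sinh_div_cosh]
    exact div_pos (Real.sinh_pos_iff.2 hu) (Real.cosh_pos u)
  have hβmem : ∀ R, R₁ < R → 0 < b * Real.tanh (s * r R) ∧ b * Real.tanh (s * r R) < b := by
    intro R hR
    have hrpos := (hr R hR).1
    constructor
    · exact mul_pos hb0 (htanh_pos _ (mul_pos hs hrpos))
    · nlinarith [htanh_lt_one (s * r R)]
  -- the uniform bound M on the root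
  set M := Real.log (4 / q) / (s - a) with hMdef
  have hlog4q : 0 < Real.log (4 / q) := Real.log_pos (by rw [lt_div_iff₀ hq0]; linarith)
  have hM0 : 0 < M := div_pos hlog4q (by linarith)
  have hbound : ∀ (x β : ℝ), 0 ≤ β → β ≤ 1 →
      q * hfnAux β (s * x) - hfnAux β (a * x) = 0 → x ≤ M := by
    intro x β hβ0 hβ1 hFx
    by_contra hxM
    push_neg at hxM
    have hx0 : 0 < x := hM0.trans hxM
    have hlogx : Real.log (4 / q) < (s - a) * x := by
      rw [hMdef, div_lt_iff₀ (by linarith : (0:ℝ) < s - a)] at hxM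
      linarith
    have hexp : 4 / q < Real.exp ((s - a) * x) := by
      calc 4 / q = Real.exp (Real.log (4 / q)) := (Real.exp_log (by positivity)).symm
        _ < Real.exp ((s - a) * x) := Real.exp_lt_exp.2 hlogx
    have hqexp : 4 < q * Real.exp ((s - a) * x) := by
      rw [div_lt_iff₀ hq0] at hexp; linarith [hexp]
    have hexpadd : Real.exp (a * x) * Real.exp ((s - a) * x) = Real.exp (s * x) := by
      rw [← Real.exp_add]; ring_nf
    -- lower bound for q * hfnAux β (s*x)
    have hcoshS := Real.cosh_eq (s * x)
    have hcoshA := Real.cosh_eq (a * x)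
    have hsinhSnn : 0 ≤ Real.sinh (s * x) := Real.sinh_nonneg_iff.2 (by positivity)
    have hsinhAnn : 0 ≤ Real.sinh (a * x) := Real.sinh_nonneg_iff.2 (by positivity)
    have hlow : q * (Real.exp (s * x) / 2) ≤ q * hfnAux β (s * x) := by
      have : Real.exp (s * x) / 2 ≤ hfnAux β (s * x) := by
        unfold hfnAux
        nlinarith [Real.exp_pos (-(s * x)), mul_nonneg hβ0 hsinhSnn]
      nlinarith
    have hhigh : hfnAux β (a * x) ≤ 2 * Real.exp (a * x) := by
      unfold hfnAux
      have h1 : Real.exp (-(a * x)) ≤ Real.exp (a * x) := by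
        apply Real.exp_le_exp.2; nlinarith
      have h2 : Real.sinh (a * x) ≤ Real.cosh (a * x) := by
        nlinarith [Real.cosh_sub_sinh (a * x), Real.exp_pos (-(a * x))]
      nlinarith [mul_le_of_le_one_left hsinhAnn hβ1, Real.cosh_pos (a * x)]
    have hcontr : 0 < q * hfnAux β (s * x) - hfnAux β (a * x) := by
      have : 2 * Real.exp (a * x) < q * (Real.exp (s * x) / 2) := by
        rw [← hexpadd]
        nlinarith [Real.exp_pos (a * x)]
      linarith
    rw [hFx] at hcontr
    exact lt_irrefl 0 hcontr
  -- every solution radius is bounded by M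
  have hRbar_le : ∀ R, R₁ < R → R - r R ≤ M := by
    intro R hR
    obtain ⟨h1, h2, h3⟩ := hr R hR
    rw [hF] at h3
    exact hbound _ _ (hβmem R hR).1.le (by linarith [(hβmem R hR).2]) h3
  -- Part 1 : r → ∞
  have hrTop : Filter.Tendsto r Filter.atTop Filter.atTop := by
    apply Filter.tendsto_atTop_mono' Filter.atTop
      (f₁ := fun R : ℝ => R - M)
    · filter_upwards [Filter.eventually_gt_atTop R₁] with R hR
      have := hRbar_le R hR
      linarith
    · simpa [sub_eq_add_neg] using
        (Filter.tendsto_atTop_add_const_right Filter.atTop (-M) Filter.tendsto_id)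
  refine ⟨hrTop, ?_⟩
  -- β(R) → b
  have hst : Filter.Tendsto (fun R => s * r R) Filter.atTop Filter.atTop :=
    Filter.Tendsto.const_mul_atTop hs hrTop
  have htanhto : Filter.Tendsto (fun R => Real.tanh (s * r R)) Filter.atTop (nhds 1) := by
    have hexp0 : Filter.Tendsto (fun R => Real.exp (-(2 * (s * r R)))) Filter.atTop (nhds 0) :=
      Real.tendsto_exp_neg_atTop_nhds_zero.comp (hst.const_mul_atTop two_pos)
    have hlo : Filter.Tendsto (fun R => 1 - 2 * Real.exp (-(2 * (s * r R))))
        Filter.atTop (nhds 1) := by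
      have := (tendsto_const_nhds (x := (1:ℝ)) (f := Filter.atTop)).sub (hexp0.const_mul 2)
      simpa using this
    apply tendsto_of_tendsto_of_tendsto_of_le_of_le' hlo tendsto_const_nhds
    · filter_upwards with R
      set u := s * r R
      have hEe : Real.exp (-u) * Real.exp u = 1 := by rw [← Real.exp_add]; simp
      have hE2 : Real.exp (-(2 * u)) = Real.exp (-u) * Real.exp (-u) := by
        rw [← Real.exp_add]; ring_nf
      have hsinh := Real.sinh_eq u
      have hcosh := Real.cosh_eq u
      rw [Real.tanh_eq_sinh_div_cosh, le_div_iff₀ (Real.cosh_pos u)]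
      nlinarith [Real.exp_pos (-u), Real.exp_pos u]
    · filter_upwards with R
      exact (htanh_lt_one (s * r R)).le
  have hβto : Filter.Tendsto (fun R => b * Real.tanh (s * r R)) Filter.atTop (nhds b) := by
    have := htanhto.const_mul b
    simpa using this
  -- g(R̄(R)) → 0 where g x = q * hfnAux b (s x) - hfnAux b (a x)
  set g : ℝ → ℝ := fun x => q * hfnAux b (s * x) - hfnAux b (a * x) with hgdef
  have hgfstar : g fstar = 0 := by rw [hgdef]; rw [hF] at hfstar; exact hfstar
  set K := 2 * Real.sinh (s * M) with hKdef
  have hg0 : Filter.Tendsto (fun R => g (R - r R)) Filter.atTop (nhds 0) := by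
    apply squeeze_zero_norm' (a := fun R => K * (b - b * Real.tanh (s * r R)))
    · filter_upwards [Filter.eventually_gt_atTop R₁] with R hR
      obtain ⟨h1, h2, h3⟩ := hr R hR
      set β := b * Real.tanh (s * r R) with hβdef
      set x := R - r R with hxdef
      have hx0 : 0 < x := by rw [hxdef]; linarith
      have hxM : x ≤ M := hRbar_le R hR
      rw [hF] at h3
      have hdiff : g x = (b - β) * (q * Real.sinh (s * x) - Real.sinh (a * x)) := by
        rw [hgdef]
        simp only [hfnAux]
        rw [sub_eq_zero] at h3
        simp only [hfnAux] at h3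
        nlinarith [h3]
      have hsinhSx : 0 ≤ Real.sinh (s * x) := Real.sinh_nonneg_iff.2 (by positivity)
      have hsinhAx : 0 ≤ Real.sinh (a * x) := Real.sinh_nonneg_iff.2 (by positivity)
      have hsinhSM : Real.sinh (s * x) ≤ Real.sinh (s * M) :=
        Real.sinh_le_sinh.2 (by nlinarith)
      have hsinhAM : Real.sinh (a * x) ≤ Real.sinh (s * M) :=
        Real.sinh_le_sinh.2 (by nlinarith)
      have hbβ : 0 ≤ b - β := by
        have := (hβmem R hR).2
        rw [← hβdef] at this
        linarith
      rw [hdiff, Real.norm_eq_abs, abs_mul, abs_of_nonneg hbβ]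
      rw [hKdef]
      have habs : |q * Real.sinh (s * x) - Real.sinh (a * x)| ≤ 2 * Real.sinh (s * M) := by
        rw [abs_le]
        constructor <;> nlinarith
      nlinarith [abs_nonneg (q * Real.sinh (s * x) - Real.sinh (a * x)), hbβ]
    · have := ((tendsto_const_nhds (x := b) (f := Filter.atTop)).sub hβto).const_mul K
      simpa using this
  -- conclude via the strict antitonicity of φ
  have hanti := phiAux_anti ha has hb0 hb1
  set φ : ℝ → ℝ := fun x => hfnAux b (a * x) / hfnAux b (s * x) with hφdef
  have hDpos : ∀ x : ℝ, 0 < hfnAux b (s * x) := fun x => hfnAux_pos hb0.le hb1.le _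
  have hgφ : ∀ x : ℝ, g x = hfnAux b (s * x) * (q - φ x) := by
    intro x
    rw [hgdef, hφdef]
    field_simp [(hfnAux_pos (le_of_lt hb0) (le_of_lt hb1) (s * x)).ne']
  have hφfstar : φ fstar = q := by
    have := hgφ fstar
    rw [hgfstar] at this
    have h0 : q - φ fstar = 0 := by
      rcases mul_eq_zero.1 this.symm with h | h
      · exact absurd h (hDpos fstar).ne'
      · exact h
    linarith
  rw [Metric.tendsto_nhds]
  intro ε hε
  set ε' := min ε (fstar / 2) with hε'def
  have hε'0 : 0 < ε' := lt_min hε (by linarith)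
  have hε'f : ε' < fstar := by
    have : ε' ≤ fstar / 2 := min_le_right _ _
    linarith
  have hx1mem : fstar - ε' ∈ Set.Ici (0:ℝ) := by simp; linarith
  have hx2mem : fstar + ε' ∈ Set.Ici (0:ℝ) := by simp; linarith
  have hfmem : fstar ∈ Set.Ici (0:ℝ) := by simp; linarith
  have hη1 : 0 < φ (fstar - ε') - q := by
    have := hanti hx1mem hfmem (by linarith)
    rw [hφdef] at this ⊢
    simp only [← hφdef] at this ⊢
    rw [← hφfstar]
    linarith
  have hη2 : 0 < q - φ (fstar + ε') := by
    have := hanti hfmem hx2mem (by linarith)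
    rw [← hφfstar]
    linarith
  set δ := min (φ (fstar - ε') - q) (q - φ (fstar + ε')) with hδdef
  have hδ0 : 0 < δ := lt_min hη1 hη2
  have hev1 : ∀ᶠ R in Filter.atTop, |g (R - r R)| < δ := by
    have := Metric.tendsto_nhds.1 hg0 δ hδ0
    filter_upwards [this] with R hR
    simpa [Real.dist_eq] using hR
  filter_upwards [hev1, Filter.eventually_gt_atTop R₁] with R hgR hRR₁
  obtain ⟨h1, h2, h3⟩ := hr R hRR₁
  set x := R - r R with hxdef
  have hx0 : 0 < x := by rw [hxdef]; linarith
  have hxmem : x ∈ Set.Ici (0:ℝ) := le_of_lt hx0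
  have hD1 : 1 ≤ hfnAux b (s * x) := hfnAux_one_le hb0.le (by positivity)
  rw [Real.dist_eq]
  have hxε' : |x - fstar| < ε' := by
    by_contra hcon
    push_neg at hcon
    rw [le_abs] at hcon
    rcases hcon with hcase | hcase
    · -- x ≥ fstar + ε'
      have hxge : fstar + ε' ≤ x := by linarith
      have hφle : φ x ≤ φ (fstar + ε') := by
        rcases eq_or_lt_of_le hxge with heq | hlt
        · rw [← heq]
        · exact (hanti hx2mem hxmem hlt).le
      have : q - φ (fstar + ε') ≤ q - φ x := by linarith
      have hglb : δ ≤ g x := by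
        rw [hgφ x]
        have hδle : δ ≤ q - φ (fstar + ε') := min_le_right _ _
        nlinarith
      have : δ ≤ |g x| := hglb.trans (le_abs_self _)
      linarith [hgR]
    · -- x ≤ fstar - ε'
      have hxle : x ≤ fstar - ε' := by linarith
      have hφge : φ (fstar - ε') ≤ φ x := by
        rcases eq_or_lt_of_le hxle with heq | hlt
        · rw [heq]
        · exact (hanti hxmem hx1mem hlt).le
      have hgub : g x ≤ -δ := by
        rw [hgφ x]
        have hδle : δ ≤ φ (fstar - ε') - q := min_le_left _ _
        nlinarith
      have : δ ≤ |g x| := le_trans (by linarith) (neg_le_abs (g x))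
      linarith [hgR]
  exact lt_of_lt_of_le hxε' (min_le_left _ _)
end

section
/- Let λ > 0, n_c ∈ (0,1), R > 0, c_B > 0, and 0 < r₂ < r₁ < R. For i = 1, 2 define ψ_i(x) = λ·n_c for |x| < r_i and ψ_i(x) = λ for r_i ≤ |x| ≤ R. Suppose c_i : [−R, R] → ℝ is continuous, continuously differentiable on (−R, R), twice differentiable on (−R, R)∖{−r_i, r_i} with c_i''(x) = ψ_i(x)·c_i(x) there, and c_i(±R) = c_B. Then c₁(x) ≥ c₂(x) for all x ∈ [−R, R]. -/
/-- Strict antitonicity from negative derivative off a finite exceptional set. -/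
lemma strictAntiOn_of_deriv_neg_finset (g : ℝ → ℝ) (E : Finset ℝ) :
    ∀ a b : ℝ, ContinuousOn g (Set.Icc a b) →
    (∀ x ∈ Set.Ioo a b, x ∉ E → deriv g x < 0) → StrictAntiOn g (Set.Icc a b) := by
  induction E using Finset.strongInduction with
  | _ E ih =>
    intro a b hc hd
    by_cases hE : ∃ e ∈ E, e ∈ Set.Ioo a b
    · obtain ⟨e, heE, he⟩ := hE
      have h1 : StrictAntiOn g (Set.Icc a e) := by
        refine ih (E.erase e) (Finset.erase_ssubset heE) a e
          (hc.mono (Set.Icc_subset_Icc le_rfl he.2.le)) ?_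
        intro x hx hxE
        refine hd x ⟨hx.1, hx.2.trans he.2⟩ ?_
        intro hxE'
        exact hxE (Finset.mem_erase.2 ⟨ne_of_lt hx.2, hxE'⟩)
      have h2 : StrictAntiOn g (Set.Icc e b) := by
        refine ih (E.erase e) (Finset.erase_ssubset heE) e b
          (hc.mono (Set.Icc_subset_Icc he.1.le le_rfl)) ?_
        intro x hx hxE
        refine hd x ⟨he.1.trans hx.1, hx.2⟩ ?_
        intro hxE'
        exact hxE (Finset.mem_erase.2 ⟨(hx.1).ne', hxE'⟩)
      intro x hx y hy hxy
      rcases le_or_gt y e with hye | hey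
      · exact h1 ⟨hx.1, hxy.le.trans hye⟩ ⟨hy.1, hye⟩ hxy
      · rcases le_or_gt e x with hex | hxe
        · exact h2 ⟨hex, hx.2⟩ ⟨hey.le, hy.2⟩ hxy
        · exact (h2 ⟨le_rfl, he.2.le⟩ ⟨hey.le, hy.2⟩ hey).trans
            (h1 ⟨hx.1, hxe.le⟩ ⟨he.1.le, le_rfl⟩ hxe)
    · push_neg at hE
      refine strictAntiOn_of_deriv_neg (convex_Icc a b) hc ?_
      intro x hx
      rw [interior_Icc] at hx
      exact hd x hx (fun hxE => (hE x hxE) hx)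

/-- Minimum principle: if `f'' < 0` wherever `f < 0` (off a finite set), and `f ≥ 0`
at the endpoints, then `f ≥ 0`. -/
lemma min_principle (a b : ℝ) (E : Finset ℝ) (f : ℝ → ℝ)
    (hc : ContinuousOn f (Set.Icc a b))
    (hd : ∀ x ∈ Set.Ioo a b, DifferentiableAt ℝ f x)
    (hd' : ContinuousOn (deriv f) (Set.Ioo a b))
    (hdd : ∀ x ∈ Set.Ioo a b, x ∉ E → f x < 0 → ∃ L, L < 0 ∧ HasDerivAt (deriv f) L x)
    (ha : 0 ≤ f a) (hb : 0 ≤ f b) :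
    ∀ x ∈ Set.Icc a b, 0 ≤ f x := by
  intro z hz
  by_contra hfz
  push_neg at hfz
  obtain ⟨x₀, hx₀, hmin⟩ := isCompact_Icc.exists_isMinOn ⟨z, hz⟩ hc
  have hfx₀ : f x₀ < 0 := lt_of_le_of_lt (hmin hz) hfz
  have hx₀a : x₀ ≠ a := fun h => absurd hfx₀ (not_lt.2 (h ▸ ha))
  have hx₀b : x₀ ≠ b := fun h => absurd hfx₀ (not_lt.2 (h ▸ hb))
  have hx₀o : x₀ ∈ Set.Ioo a b := ⟨lt_of_le_of_ne hx₀.1 (Ne.symm hx₀a), lt_of_le_of_ne hx₀.2 hx₀b⟩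
  have hIccnhds : Set.Icc a b ∈ nhds x₀ := Icc_mem_nhds hx₀o.1 hx₀o.2
  have hcontAt : ContinuousAt f x₀ := hc.continuousAt hIccnhds
  have hev : ∀ᶠ x in nhds x₀, f x < 0 ∧ x ∈ Set.Ioo a b := by
    filter_upwards [hcontAt.eventually_lt continuousAt_const hfx₀,
      isOpen_Ioo.mem_nhds hx₀o] with x h1 h2
    exact ⟨h1, h2⟩
  obtain ⟨ε, hε, hball⟩ := Metric.eventually_nhds_iff_ball.1 hev
  set δ := ε / 2 with hδdef
  have hδ : 0 < δ := by positivity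
  have hsub : Set.Icc (x₀ - δ) (x₀ + δ) ⊆ Metric.ball x₀ ε := by
    intro x hx
    rw [Metric.mem_ball, Real.dist_eq, abs_sub_lt_iff]
    constructor <;> [linarith [hx.2]; linarith [hx.1]]
  have hprop : ∀ x ∈ Set.Icc (x₀ - δ) (x₀ + δ), f x < 0 ∧ x ∈ Set.Ioo a b :=
    fun x hx => hball x (hsub hx)
  -- deriv f is strictly antitone on the small interval
  have hanti : StrictAntiOn (deriv f) (Set.Icc (x₀ - δ) (x₀ + δ)) := by
    refine strictAntiOn_of_deriv_neg_finset (deriv f) E (x₀ - δ) (x₀ + δ)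
      (hd'.mono (fun x hx => (hprop x hx).2)) ?_
    intro x hx hxE
    have hx' := hprop x ⟨hx.1.le, hx.2.le⟩
    obtain ⟨L, hL, hLd⟩ := hdd x hx'.2 hxE hx'.1
    rw [hLd.deriv]; exact hL
  have hderiv0 : deriv f x₀ = 0 :=
    (hmin.isLocalMin hIccnhds).deriv_eq_zero
  have hx₀mem : x₀ ∈ Set.Icc (x₀ - δ) (x₀ + δ) := by
    constructor <;> linarith
  have hfanti : StrictAntiOn f (Set.Icc x₀ (x₀ + δ)) := by
    refine strictAntiOn_of_deriv_neg (convex_Icc _ _)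
      (hc.mono ?_) ?_
    · intro x hx
      exact Set.mem_Icc_of_Ioo ((hprop x ⟨by linarith [hx.1], hx.2⟩).2)
    · intro x hx
      rw [interior_Icc] at hx
      have : deriv f x < deriv f x₀ :=
        hanti hx₀mem ⟨by linarith [hx.1], hx.2.le⟩ hx.1
      rwa [hderiv0] at this
  have hlt : f (x₀ + δ) < f x₀ :=
    hfanti ⟨le_rfl, by linarith⟩ ⟨by linarith, le_rfl⟩ (by linarith)
  have hmem : x₀ + δ ∈ Set.Icc a b :=
    Set.mem_Icc_of_Ioo (hprop _ ⟨by linarith, le_rfl⟩).2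
  exact absurd (hmin hmem) (not_le.2 hlt)

/-- The nutrient profile with necrotic core radius `r` on the fixed domain `(-R, R)`:
`c` is continuous on `[-R,R]`, `C¹` on `(-R,R)`, twice differentiable away from `|x| = r`
with `c'' = ψ c` where `ψ(x) = λ n_c` for `|x| < r` and `ψ(x) = λ` for `r ≤ |x| ≤ R`,
and `c(±R) = c_B`. -/
def NutrientProfile (R lam n_c cB r : ℝ) (c : ℝ → ℝ) : Prop :=
  ContinuousOn c (Set.Icc (-R) R) ∧
  (∀ x ∈ Set.Ioo (-R) R, DifferentiableAt ℝ c x) ∧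
  ContinuousOn (deriv c) (Set.Ioo (-R) R) ∧
  (∀ x ∈ Set.Ioo (-R) R, |x| ≠ r →
    HasDerivAt (deriv c) ((if |x| < r then lam * n_c else lam) * c x) x) ∧
  c (-R) = cB ∧ c R = cB

/-- Nutrient comparison: a solution with a larger necrotic core (`r₁ > r₂`) consumes less
nutrient, hence its nutrient profile dominates pointwise on `[-R, R]`. -/
theorem stmt_14 (lam n_c R cB r₁ r₂ : ℝ)
    (hlam : 0 < lam) (hn_c : n_c ∈ Set.Ioo (0 : ℝ) 1) (hR : 0 < R) (hcB : 0 < cB)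
    (hr₂ : 0 < r₂) (hr : r₂ < r₁) (hr₁ : r₁ < R)
    (c₁ c₂ : ℝ → ℝ)
    (h₁ : NutrientProfile R lam n_c cB r₁ c₁)
    (h₂ : NutrientProfile R lam n_c cB r₂ c₂) :
    ∀ x ∈ Set.Icc (-R) R, c₂ x ≤ c₁ x := by
  obtain ⟨hc1, hd1, hd1', hdd1, hl1, hr1⟩ := h₁
  obtain ⟨hc2, hd2, hd2', hdd2, hl2, hr2⟩ := h₂
  -- Step 1: c₂ ≥ 0 on [-R, R]
  have hc₂pos : ∀ x ∈ Set.Icc (-R) R, 0 ≤ c₂ x := by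
    refine min_principle (-R) R {r₂, -r₂} c₂ hc2 hd2 hd2' ?_ (by rw [hl2]; exact hcB.le)
      (by rw [hr2]; exact hcB.le)
    intro x hx hxE hfx
    have habs : |x| ≠ r₂ := by
      intro h
      rcases abs_eq hr₂.le |>.1 h with h' | h' <;>
        simp [h'] at hxE
    refine ⟨(if |x| < r₂ then lam * n_c else lam) * c₂ x, ?_, hdd2 x hx habs⟩
    have hψ : 0 < if |x| < r₂ then lam * n_c else lam := by
      split <;> [exact mul_pos hlam hn_c.1; exact hlam]
    exact mul_neg_of_pos_of_neg hψ hfx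
  -- Step 2: min principle for w = c₁ - c₂
  have key : ∀ x ∈ Set.Icc (-R) R, 0 ≤ c₁ x - c₂ x := by
    refine min_principle (-R) R {r₁, -r₁, r₂, -r₂} (fun x => c₁ x - c₂ x)
      (hc1.sub hc2) (fun x hx => (hd1 x hx).sub (hd2 x hx)) ?_ ?_
      (by show (0:ℝ) ≤ c₁ (-R) - c₂ (-R); rw [hl1, hl2]; simp) (by show (0:ℝ) ≤ c₁ R - c₂ R; rw [hr1, hr2]; simp)
    · refine ((hd1'.sub hd2').congr ?_)
      intro x hx
      exact deriv_sub (hd1 x hx) (hd2 x hx)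
    · intro x hx hxE hfx
      have habs1 : |x| ≠ r₁ := by
        intro h
        rcases (abs_eq (hr₂.trans hr).le).1 h with h' | h' <;> simp [h'] at hxE
      have habs2 : |x| ≠ r₂ := by
        intro h
        rcases (abs_eq hr₂.le).1 h with h' | h' <;> simp [h'] at hxE
      have H1 := hdd1 x hx habs1
      have H2 := hdd2 x hx habs2
      have H := H1.sub H2
      have heq : deriv (fun x => c₁ x - c₂ x) =ᶠ[nhds x]
          fun y => deriv c₁ y - deriv c₂ y := by
        filter_upwards [isOpen_Ioo.mem_nhds hx] with y hy
        exact deriv_sub (hd1 y hy) (hd2 y hy)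
      refine ⟨_, ?_, HasDerivAt.congr_of_eventuallyEq H heq⟩
      have hc2x : 0 ≤ c₂ x := hc₂pos x (Set.mem_Icc_of_Ioo hx)
      have hfx' : c₁ x - c₂ x < 0 := hfx
      by_cases h1 : |x| < r₁ <;> by_cases h2 : |x| < r₂
      · simp only [if_pos h1, if_pos h2]
        nlinarith [mul_pos hlam hn_c.1]
      · simp only [if_pos h1, if_neg h2]
        nlinarith [mul_neg_of_pos_of_neg (mul_pos hlam hn_c.1) hfx',
          mul_nonneg (mul_nonneg hlam.le (sub_nonneg.2 hn_c.2.le)) hc2x]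
      · exact absurd (h2.trans hr) h1
      · simp only [if_neg h1, if_neg h2]
        nlinarith
  intro x hx
  linarith [key x hx]
end
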